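/- arXiv:2502.01544 — 9 statements merged into one kernel-verified Lean document; each statement's English description precedes it below -/
import Mathlib

section
/- Let 𝓑 be a simple expansion set over X, let v be a vertex, and let b ∈ v with |ℰ(b)| = 2. Then (v − {b}) ∪ Bas(b) is again a vertex, it has the same support as v (so if supp(v) = X then it is a full-support vertex), and its cardinality is strictly greater than |v|. -/
structure SimpleExpansionSet (B : Type*) (X : Type*) where
  supp : B → Set X
  supp_nonempty : ∀ b, (supp b).Nonempty
  E : B → Set (Finset B)
  self_mem : ∀ b, ({b} : Finset B) ∈ E b
  proper_unique : ∀ b : B, ∀ u ∈ E b, ∀ w ∈ E b, u ≠ {b} → w ≠ {b} → u = w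
  proper_disjoint : ∀ b : B, ∀ v ∈ E b, v ≠ {b} →
    ∀ b₁ ∈ v, ∀ b₂ ∈ v, b₁ ≠ b₂ → Disjoint (supp b₁) (supp b₂)
  proper_supp : ∀ b : B, ∀ v ∈ E b, v ≠ {b} → (⋃ b' ∈ v, supp b') = supp b
  proper_card : ∀ b : B, ∀ v ∈ E b, v ≠ {b} → 2 ≤ v.card

namespace SimpleExpansionSet

variable {B X : Type*}

/-- A vertex: a finite subset of `𝓑` whose members have pairwise disjoint supports. -/
def IsVertex (S : SimpleExpansionSet B X) (v : Finset B) : Prop :=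
  ∀ b₁ ∈ v, ∀ b₂ ∈ v, b₁ ≠ b₂ → Disjoint (S.supp b₁) (S.supp b₂)

/-- The support of a vertex. -/
def vsupp (S : SimpleExpansionSet B X) (v : Finset B) : Set X :=
  ⋃ b ∈ v, S.supp b

/-- `|ℰ(b)| = 2`, i.e. `b` admits a proper expansion. -/
def HasExpansion (S : SimpleExpansionSet B X) (b : B) : Prop :=
  ∃ u ∈ S.E b, u ≠ {b}

/-- The contraction basin of `b`: the unique member of `ℰ(b) - {{b}}` (when it exists). -/
noncomputable def Bas (S : SimpleExpansionSet B X) (b : B) : Finset B :=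
  @dite _ (S.HasExpansion b) (Classical.propDecidable _) (fun h => h.choose) (fun _ => {b})

/-- The restriction `r_b(u) = {b' ∈ u : supp b' ⊆ supp b}`. -/
noncomputable def restrict (S : SimpleExpansionSet B X) (b : B) (u : Finset B) : Finset B :=
  @Finset.filter _ (fun b' => S.supp b' ⊆ S.supp b) (Classical.decPred _) u

/-- The partial order on `ℰ(b)`: `{b}` is below everything. -/
def Eleq (b : B) (u w : Finset B) : Prop := u = w ∨ u = {b}

/-- The cube `𝒞(v₁, v₂)`, as a set of vertices. -/
noncomputable def cube [DecidableEq B] (S : SimpleExpansionSet B X) (v₁ v₂ : Finset B) :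
    Set (Finset B) :=
  { u | ∃ w ⊆ v₂, u = (v₁ \ v₂) ∪ (v₂ \ w) ∪ w.biUnion S.Bas }

/-- One expansion step: replace `b ∈ u` by its contraction basin. -/
def Step [DecidableEq B] (S : SimpleExpansionSet B X) (u v : Finset B) : Prop :=
  ∃ b ∈ u, S.HasExpansion b ∧ v = u.erase b ∪ S.Bas b

/-- The ascending-path relation `⪯`. -/
def Prec [DecidableEq B] (S : SimpleExpansionSet B X) : Finset B → Finset B → Prop :=
  Relation.ReflTransGen (S.Step)

/-- `u` is joined to `v` by a cubical edge with basin `Bsn` (relative to `v`). -/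
def BasinOf [DecidableEq B] (S : SimpleExpansionSet B X) (v u Bsn : Finset B) : Prop :=
  (∃ b ∈ v, S.HasExpansion b ∧ u = v.erase b ∪ S.Bas b ∧ Bsn = {b}) ∨
  (∃ b ∈ u, S.HasExpansion b ∧ v = u.erase b ∪ S.Bas b ∧ Bsn = S.Bas b)

end SimpleExpansionSet

open SimpleExpansionSet

/-- expanding a vertex at `b` yields a vertex with the same support and
strictly larger cardinality. -/
theorem expansion_isVertex {B X : Type*} [DecidableEq B] (S : SimpleExpansionSet B X)
    (v : Finset B) (hv : S.IsVertex v) (b : B) (hb : b ∈ v) (hexp : S.HasExpansion b) :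
    S.IsVertex (v.erase b ∪ S.Bas b) ∧
    S.vsupp (v.erase b ∪ S.Bas b) = S.vsupp v ∧
    (S.vsupp v = Set.univ → S.vsupp (v.erase b ∪ S.Bas b) = Set.univ) ∧
    v.card < (v.erase b ∪ S.Bas b).card := by
  have hBmem : S.Bas b ∈ S.E b := by
    rw [Bas, dif_pos hexp]; exact hexp.choose_spec.1
  have hBne : S.Bas b ≠ ({b} : Finset B) := by
    rw [Bas, dif_pos hexp]; exact hexp.choose_spec.2
  have hdisj := S.proper_disjoint b _ hBmem hBne
  have hsupp := S.proper_supp b _ hBmem hBne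
  have hcard := S.proper_card b _ hBmem hBne
  have hsub : ∀ b' ∈ S.Bas b, S.supp b' ⊆ S.supp b := by
    intro b' hb' x hx
    rw [← hsupp]
    exact Set.mem_biUnion hb' hx
  -- members of erase and Bas b are distinct
  have hnotin : ∀ b' ∈ S.Bas b, b' ∉ v.erase b := by
    intro b' hb' hmem
    obtain ⟨x, hx⟩ := S.supp_nonempty b'
    have h1 : Disjoint (S.supp b') (S.supp b) :=
      hv b' (Finset.mem_of_mem_erase hmem) b hb (Finset.ne_of_mem_erase hmem)
    exact h1.le_bot ⟨hx, hsub b' hb' hx⟩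
  have hvert : S.IsVertex (v.erase b ∪ S.Bas b) := by
    intro b₁ h1 b₂ h2 hne
    rcases Finset.mem_union.1 h1 with h1 | h1 <;> rcases Finset.mem_union.1 h2 with h2 | h2
    · exact hv b₁ (Finset.mem_of_mem_erase h1) b₂ (Finset.mem_of_mem_erase h2) hne
    · exact ((hv b₁ (Finset.mem_of_mem_erase h1) b hb
        (Finset.ne_of_mem_erase h1)).mono_right (hsub b₂ h2))
    · exact ((hv b₂ (Finset.mem_of_mem_erase h2) b hb
        (Finset.ne_of_mem_erase h2)).mono_right (hsub b₁ h1)).symm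
    · exact hdisj b₁ h1 b₂ h2 hne
  have hvs : S.vsupp (v.erase b ∪ S.Bas b) = S.vsupp v := by
    apply Set.Subset.antisymm
    · intro x hx
      simp only [vsupp, Set.mem_iUnion, exists_prop] at hx; rcases hx with ⟨b', hb', hxb⟩
      rcases Finset.mem_union.1 hb' with h | h
      · exact Set.mem_biUnion (Finset.mem_of_mem_erase h) hxb
      · exact Set.mem_biUnion hb (hsub b' h hxb)
    · intro x hx
      simp only [vsupp, Set.mem_iUnion, exists_prop] at hx; rcases hx with ⟨b', hb', hxb⟩
      by_cases hbb : b' = b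
      · subst hbb
        rw [← hsupp] at hxb
        simp only [Set.mem_iUnion, exists_prop] at hxb; rcases hxb with ⟨b₂, h2, hxb2⟩
        exact Set.mem_biUnion (Finset.mem_union_right _ h2) hxb2
      · exact Set.mem_biUnion (Finset.mem_union_left _ (Finset.mem_erase.2 ⟨hbb, hb'⟩)) hxb
  refine ⟨hvert, hvs, fun h => hvs.trans h, ?_⟩
  have hdisjf : Disjoint (v.erase b) (S.Bas b) :=
    Finset.disjoint_right.2 fun b' hb' => hnotin b' hb'
  rw [Finset.card_union_of_disjoint hdisjf, Finset.card_erase_of_mem hb]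
  have hv1 : 1 ≤ v.card := Finset.card_pos.2 ⟨b, hb⟩
  omega
end

section
/- Let 𝓑 be a simple expansion set over X and let v = {b₁,…,b_k} be a full-support vertex. Then the map sending a family (B_b)_{b ∈ v} ∈ ∏_{b ∈ v} ℰ(b) to the set ⋃_{b ∈ v} B_b is a bijection from ∏_{b ∈ v} ℰ(b) onto the set of vertices of the ascending star of v (namely v itself together with all full-support vertices u such that r_b(u) ∈ ℰ(b) for every b ∈ v), and this bijection is an order isomorphism, where the ascending star is ordered by u ≤ w iff r_b(u) ≤ r_b(w) in ℰ(b) for all b ∈ v, and the product carries the product order. -/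
open SimpleExpansionSet

section Aux

variable {B X : Type*}

lemma aux_supp_subset (S : SimpleExpansionSet B X) {b : B} {u : Finset B}
    (hu : u ∈ S.E b) {b' : B} (hb' : b' ∈ u) : S.supp b' ⊆ S.supp b := by
  by_cases h : u = ({b} : Finset B)
  · subst h
    simp only [Finset.mem_singleton] at hb'
    subst hb'
    exact subset_rfl
  · rw [← S.proper_supp b u hu h]
    exact Set.subset_biUnion_of_mem hb'

lemma aux_union_supp (S : SimpleExpansionSet B X) {b : B} {u : Finset B}
    (hu : u ∈ S.E b) : (⋃ b' ∈ u, S.supp b') = S.supp b := by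
  by_cases h : u = ({b} : Finset B)
  · subst h; simp
  · exact S.proper_supp b u hu h

lemma aux_disjoint (S : SimpleExpansionSet B X) {b : B} {u : Finset B}
    (hu : u ∈ S.E b) {b₁ b₂ : B} (h₁ : b₁ ∈ u) (h₂ : b₂ ∈ u) (hne : b₁ ≠ b₂) :
    Disjoint (S.supp b₁) (S.supp b₂) := by
  by_cases h : u = ({b} : Finset B)
  · subst h
    simp only [Finset.mem_singleton] at h₁ h₂
    exact absurd (h₁.trans h₂.symm) hne
  · exact S.proper_disjoint b u hu h b₁ h₁ b₂ h₂ hne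

lemma aux_mem_restrict (S : SimpleExpansionSet B X) {b b' : B} {u : Finset B} :
    b' ∈ S.restrict b u ↔ b' ∈ u ∧ S.supp b' ⊆ S.supp b := by
  unfold SimpleExpansionSet.restrict
  exact @Finset.mem_filter _ _ (Classical.decPred _) u b'

end Aux

/-- the ascending star of a full-support vertex `v` is order-isomorphic to
`∏_{b ∈ v} ℰ(b)` via the map sending a family `(B_b)_{b ∈ v}` to `⋃_{b ∈ v} B_b`. -/
theorem ascendingStar_orderIso {B X : Type*} [DecidableEq B] (S : SimpleExpansionSet B X)
    (v : Finset B) (hv : S.IsVertex v) (hfull : S.vsupp v = Set.univ) :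
    ∃ F : {p : {x // x ∈ v} → Finset B // ∀ b, p b ∈ S.E b.1} → Finset B,
      (∀ p, F p = v.attach.biUnion fun b => p.1 b) ∧
      (∀ p, F p ∈ insert v
        {u | S.IsVertex u ∧ S.vsupp u = Set.univ ∧ ∀ b ∈ v, S.restrict b u ∈ S.E b}) ∧
      Function.Injective F ∧
      (∀ u ∈ insert v
          {u | S.IsVertex u ∧ S.vsupp u = Set.univ ∧ ∀ b ∈ v, S.restrict b u ∈ S.E b},
        ∃ p, F p = u) ∧
      (∀ p q, (∀ b, Eleq b.1 (p.1 b) (q.1 b)) ↔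
        ∀ b ∈ v, Eleq b (S.restrict b (F p)) (S.restrict b (F q))) := by
  classical
  have memF : ∀ (p : {p : {x // x ∈ v} → Finset B // ∀ b, p b ∈ S.E b.1}) (b'' : B),
      b'' ∈ v.attach.biUnion (fun c => p.1 c) ↔ ∃ c : {x // x ∈ v}, b'' ∈ p.1 c := by
    intro p b''
    simp [Finset.mem_biUnion]
  have key : ∀ (p : {p : {x // x ∈ v} → Finset B // ∀ b, p b ∈ S.E b.1}) (b : B) (hb : b ∈ v),
      S.restrict b (v.attach.biUnion fun c => p.1 c) = p.1 ⟨b, hb⟩ := by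
    intro p b hb
    ext b''
    rw [aux_mem_restrict, memF]
    constructor
    · rintro ⟨⟨⟨c, hc⟩, hbc⟩, hsub⟩
      by_cases hcb : c = b
      · subst hcb; exact hbc
      · exfalso
        have h1 : S.supp b'' ⊆ S.supp c := aux_supp_subset S (p.2 ⟨c, hc⟩) hbc
        have hd : Disjoint (S.supp c) (S.supp b) := hv c hc b hb hcb
        obtain ⟨x, hx⟩ := S.supp_nonempty b''
        exact Set.disjoint_left.mp hd (h1 hx) (hsub hx)
    · intro h
      exact ⟨⟨⟨b, hb⟩, h⟩, aux_supp_subset S (p.2 ⟨b, hb⟩) h⟩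
  have hvert : ∀ p : {p : {x // x ∈ v} → Finset B // ∀ b, p b ∈ S.E b.1},
      S.IsVertex (v.attach.biUnion fun c => p.1 c) := by
    intro p b₁ h₁ b₂ h₂ hne
    obtain ⟨c₁, hc₁⟩ := (memF p b₁).mp h₁
    obtain ⟨c₂, hc₂⟩ := (memF p b₂).mp h₂
    by_cases hcc : c₁ = c₂
    · subst hcc; exact aux_disjoint S (p.2 c₁) hc₁ hc₂ hne
    · have hne' : c₁.1 ≠ c₂.1 := fun h => hcc (Subtype.ext h)
      exact (hv c₁.1 c₁.2 c₂.1 c₂.2 hne').mono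
        (aux_supp_subset S (p.2 c₁) hc₁) (aux_supp_subset S (p.2 c₂) hc₂)
  have hfullF : ∀ p : {p : {x // x ∈ v} → Finset B // ∀ b, p b ∈ S.E b.1},
      S.vsupp (v.attach.biUnion fun c => p.1 c) = Set.univ := by
    intro p
    apply Set.eq_univ_of_univ_subset
    intro x _
    have hx : x ∈ S.vsupp v := by rw [hfull]; trivial
    simp only [vsupp, Set.mem_iUnion] at hx
    obtain ⟨b, hb, hxb⟩ := hx
    have h2 := aux_union_supp S (p.2 ⟨b, hb⟩)
    rw [← h2] at hxb
    simp only [Set.mem_iUnion] at hxb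
    obtain ⟨b', hb', hxb'⟩ := hxb
    simp only [vsupp, Set.mem_iUnion]
    exact ⟨b', (memF p b').mpr ⟨⟨b, hb⟩, hb'⟩, hxb'⟩
  refine ⟨fun p => v.attach.biUnion fun b => p.1 b, fun _ => rfl, ?_, ?_, ?_, ?_⟩
  · intro p
    exact Set.mem_insert_iff.mpr (Or.inr ⟨hvert p, hfullF p,
      fun b hb => by rw [key p b hb]; exact p.2 ⟨b, hb⟩⟩)
  · intro p q hpq
    apply Subtype.ext
    funext c
    have hpq' : (v.attach.biUnion fun b => p.1 b) = v.attach.biUnion fun b => q.1 b := hpq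
    have h1 := key p c.1 c.2
    have h2 := key q c.1 c.2
    rw [hpq'] at h1
    exact h1.symm.trans h2
  · intro u hu
    rcases Set.mem_insert_iff.mp hu with h | h
    · refine ⟨⟨fun b => {b.1}, fun b => S.self_mem b.1⟩, ?_⟩
      subst h
      ext b''
      simp [Finset.mem_biUnion]
    · obtain ⟨huv, _, hur⟩ := h
      refine ⟨⟨fun b => S.restrict b.1 u, fun b => hur b.1 b.2⟩, ?_⟩
      ext b''
      rw [memF ⟨fun b => S.restrict b.1 u, fun b => hur b.1 b.2⟩ b'']
      constructor
      · rintro ⟨c, hc⟩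
        exact (aux_mem_restrict S).mp hc |>.1
      · intro hb''
        obtain ⟨x, hx⟩ := S.supp_nonempty b''
        have hxv : x ∈ S.vsupp v := by rw [hfull]; trivial
        simp only [vsupp, Set.mem_iUnion] at hxv
        obtain ⟨b, hb, hxb⟩ := hxv
        have h2 := aux_union_supp S (hur b hb)
        rw [← h2] at hxb
        simp only [Set.mem_iUnion] at hxb
        obtain ⟨b''', hb''', hx'⟩ := hxb
        have hbu : b''' ∈ u := (aux_mem_restrict S).mp hb''' |>.1
        by_cases he : b''' = b''
        · subst he; exact ⟨⟨b, hb⟩, hb'''⟩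
        · exact absurd hx (Set.disjoint_left.mp (huv b''' hbu b'' hb'' he) hx' |> fun h => h)
  · intro p q
    constructor
    · intro h b hb
      rw [key p b hb, key q b hb]
      exact h ⟨b, hb⟩
    · intro h b
      have := h b.1 b.2
      rw [key p b.1 b.2, key q b.1 b.2] at this
      exact this
end

section
/- Let 𝓑 be a simple expansion set over X. Every simplex of the full-support complex Δ^f_𝓑 is contained in a cube: if distinct full-support vertices v₀,…,v_n with |v₀| < … < |v_n| span a simplex of Δ^f_𝓑, then there exist vertices v₂ ⊆ v₁ with |ℰ(b)| = 2 for all b ∈ v₂ such that {v₀,…,v_n} ⊆ 𝒞(v₁,v₂); indeed one may take v₁ = v₀ and v₂ = {b ∈ v₀ : r_b(v_n) = Bas(b)}. -/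
open SimpleExpansionSet

lemma SimpleExpansionSet.Bas_spec {B X : Type*} (S : SimpleExpansionSet B X) {b : B}
    (h : S.HasExpansion b) : S.Bas b ∈ S.E b ∧ S.Bas b ≠ ({b} : Finset B) := by
  unfold SimpleExpansionSet.Bas
  rw [dif_pos h]
  exact h.choose_spec

lemma SimpleExpansionSet.mem_restrict {B X : Type*} (S : SimpleExpansionSet B X)
    {b b' : B} {u : Finset B} :
    b' ∈ S.restrict b u ↔ b' ∈ u ∧ S.supp b' ⊆ S.supp b := by
  classical
  simp [SimpleExpansionSet.restrict, Finset.mem_filter]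

lemma SimpleExpansionSet.restrict_subset {B X : Type*} (S : SimpleExpansionSet B X)
    (b : B) (u : Finset B) : S.restrict b u ⊆ u :=
  fun _ h => (S.mem_restrict.mp h).1

lemma SimpleExpansionSet.restrict_eq_Bas {B X : Type*} (S : SimpleExpansionSet B X)
    {b : B} {u : Finset B} (hE : S.restrict b u ∈ S.E b) (hne : S.restrict b u ≠ {b}) :
    S.HasExpansion b ∧ S.restrict b u = S.Bas b := by
  have h : S.HasExpansion b := ⟨_, hE, hne⟩
  obtain ⟨h1, h2⟩ := S.Bas_spec h
  exact ⟨h, S.proper_unique b _ hE _ h1 hne h2⟩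

/-- every simplex of `Δ^f_𝓑` is contained in a cube; one may take
`v₁ = v₀` and `v₂ = {b ∈ v₀ : r_b(v_n) = Bas(b)}`. -/
theorem simplex_subset_cube {B X : Type*} [DecidableEq B] (S : SimpleExpansionSet B X)
    (n : ℕ) (v : Fin (n + 1) → Finset B)
    (hvert : ∀ j, S.IsVertex (v j)) (hfull : ∀ j, S.vsupp (v j) = Set.univ)
    (hcard : ∀ j k : Fin (n + 1), j < k → (v j).card < (v k).card)
    (hchain : ∀ b ∈ v 0, S.restrict b (v 0) = {b} ∧
      (∀ j, S.restrict b (v j) ∈ S.E b) ∧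
      (∀ j k : Fin (n + 1), j ≤ k → Eleq b (S.restrict b (v j)) (S.restrict b (v k)))) :
    ∃ v₂ ⊆ v 0, (∀ b ∈ v₂, S.HasExpansion b) ∧
      (∀ b : B, b ∈ v₂ ↔ b ∈ v 0 ∧ S.HasExpansion b ∧
        S.restrict b (v (Fin.last n)) = S.Bas b) ∧
      ∀ j, v j ∈ S.cube (v 0) v₂ := by
  classical
  set v₂ : Finset B := (v 0).filter
    (fun b => S.HasExpansion b ∧ S.restrict b (v (Fin.last n)) = S.Bas b) with hv₂def
  have hv₂mem : ∀ b : B, b ∈ v₂ ↔ b ∈ v 0 ∧ S.HasExpansion b ∧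
      S.restrict b (v (Fin.last n)) = S.Bas b := by
    intro b; simp [hv₂def, Finset.mem_filter]
  -- key: every element of v j lies in the restriction of some b ∈ v 0
  have hkey : ∀ j : Fin (n + 1), ∀ b' ∈ v j, ∃ b ∈ v 0, b' ∈ S.restrict b (v j) := by
    intro j b' hb'
    obtain ⟨x, hx⟩ := S.supp_nonempty b'
    have hxu : x ∈ S.vsupp (v 0) := (hfull 0) ▸ Set.mem_univ x
    simp only [SimpleExpansionSet.vsupp, Set.mem_iUnion] at hxu
    obtain ⟨b, hb0, hxb⟩ := hxu
    refine ⟨b, hb0, ?_⟩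
    obtain ⟨-, hEb, -⟩ := hchain b hb0
    have hEj := hEb j
    by_cases hbe : S.restrict b (v j) = {b}
    · have hbj : b ∈ v j := S.restrict_subset b (v j)
        (hbe ▸ Finset.mem_singleton_self b)
      have hbb : b' = b := by
        by_contra hne
        exact Set.disjoint_left.mp (hvert j b' hb' b hbj hne) hx hxb
      rw [hbb, hbe]; exact Finset.mem_singleton_self b
    · have hsupp := S.proper_supp b _ hEj hbe
      rw [← hsupp] at hxb
      simp only [Set.mem_iUnion] at hxb
      obtain ⟨c, hc, hxc⟩ := hxb
      have hcj : c ∈ v j := S.restrict_subset b (v j) hc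
      have hbc : b' = c := by
        by_contra hne
        exact Set.disjoint_left.mp (hvert j b' hb' c hcj hne) hx hxc
      rw [hbc]; exact hc
  refine ⟨v₂, Finset.filter_subset _ _, fun b hb => ((hv₂mem b).mp hb).2.1, hv₂mem, ?_⟩
  intro j
  set w : Finset B := (v 0).filter (fun b => S.restrict b (v j) ≠ {b}) with hwdef
  have hwmem : ∀ b : B, b ∈ w ↔ b ∈ v 0 ∧ S.restrict b (v j) ≠ {b} := by
    intro b; simp [hwdef, Finset.mem_filter]
  -- elements of w have restriction equal to Bas
  have hwBas : ∀ b ∈ w, S.HasExpansion b ∧ S.restrict b (v j) = S.Bas b := by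
    intro b hb
    obtain ⟨hb0, hne⟩ := (hwmem b).mp hb
    exact S.restrict_eq_Bas ((hchain b hb0).2.1 j) hne
  have hwv₂ : w ⊆ v₂ := by
    intro b hb
    obtain ⟨hb0, hne⟩ := (hwmem b).mp hb
    obtain ⟨hexp, hBas⟩ := hwBas b hb
    rcases (hchain b hb0).2.2 j (Fin.last n) (Fin.le_last j) with heq | hself
    · exact (hv₂mem b).mpr ⟨hb0, hexp, heq ▸ hBas⟩
    · exact absurd hself hne
  refine ⟨w, hwv₂, ?_⟩
  -- the equality v j = (v0 \ v₂) ∪ (v₂ \ w) ∪ w.biUnion Bas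
  ext b'
  constructor
  · intro hb'
    obtain ⟨b, hb0, hbr⟩ := hkey j b' hb'
    by_cases hbe : S.restrict b (v j) = {b}
    · have hbb : b' = b := Finset.mem_singleton.mp (hbe ▸ hbr)
      subst hbb
      have hbw : b' ∉ w := fun h => ((hwmem b').mp h).2 hbe
      by_cases hbv₂ : b' ∈ v₂
      · exact Finset.mem_union_left _
          (Finset.mem_union_right _ (Finset.mem_sdiff.mpr ⟨hbv₂, hbw⟩))
      · exact Finset.mem_union_left _
          (Finset.mem_union_left _ (Finset.mem_sdiff.mpr ⟨hb0, hbv₂⟩))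
    · have hbw : b ∈ w := (hwmem b).mpr ⟨hb0, hbe⟩
      obtain ⟨-, hBas⟩ := hwBas b hbw
      exact Finset.mem_union_right _
        (Finset.mem_biUnion.mpr ⟨b, hbw, hBas ▸ hbr⟩)
  · intro hb'
    rcases Finset.mem_union.mp hb' with h | h
    · rcases Finset.mem_union.mp h with h | h
      · obtain ⟨hb0, hbv₂⟩ := Finset.mem_sdiff.mp h
        have hbe : S.restrict b' (v j) = {b'} := by
          by_contra hne
          exact hbv₂ (hwv₂ ((hwmem b').mpr ⟨hb0, hne⟩))
        exact S.restrict_subset b' (v j) (hbe ▸ Finset.mem_singleton_self b')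
      · obtain ⟨hbv₂, hbw⟩ := Finset.mem_sdiff.mp h
        have hb0 : b' ∈ v 0 := ((hv₂mem b').mp hbv₂).1
        have hbe : S.restrict b' (v j) = {b'} := by
          by_contra hne
          exact hbw ((hwmem b').mpr ⟨hb0, hne⟩)
        exact S.restrict_subset b' (v j) (hbe ▸ Finset.mem_singleton_self b')
    · obtain ⟨b, hbw, hbB⟩ := Finset.mem_biUnion.mp h
      obtain ⟨-, hBas⟩ := hwBas b hbw
      exact S.restrict_subset b (v j) (hBas ▸ hbB)
end

section
/- (Intersection lemma) Let 𝓑 be a simple expansion set over X and let 𝒞 = 𝒞(v₁,v₂) and 𝒞' = 𝒞(v₁',v₂') be cubes. If b ∈ v₁ and b ∈ Bas(b') for some b' ∈ v₂', then b ∈ w for every vertex w ∈ 𝒞 ∩ 𝒞'. -/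
open SimpleExpansionSet

section Aux

variable {B X : Type*}

lemma bas_mem_E {S : SimpleExpansionSet B X} {b : B} (h : S.HasExpansion b) :
    S.Bas b ∈ S.E b ∧ S.Bas b ≠ ({b} : Finset B) := by
  unfold SimpleExpansionSet.Bas
  rw [dif_pos h]
  exact ⟨h.choose_spec.1, h.choose_spec.2⟩

lemma supp_subset_of_mem_bas {S : SimpleExpansionSet B X} {b c : B}
    (h : S.HasExpansion b) (hc : c ∈ S.Bas b) : S.supp c ⊆ S.supp b := by
  have hs := S.proper_supp b _ (bas_mem_E h).1 (bas_mem_E h).2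
  rw [← hs]
  exact Set.subset_iUnion₂ (s := fun b' (_ : b' ∈ S.Bas b) => S.supp b') c hc

lemma bas_supp_ne {S : SimpleExpansionSet B X} {b c : B}
    (h : S.HasExpansion b) (hc : c ∈ S.Bas b) : S.supp c ≠ S.supp b := by
  have hcard := S.proper_card b _ (bas_mem_E h).1 (bas_mem_E h).2
  obtain ⟨d, hd, hdc⟩ := Finset.exists_mem_ne (s := S.Bas b) (by omega) c
  have hdisj := S.proper_disjoint b _ (bas_mem_E h).1 (bas_mem_E h).2 d hd c hc hdc
  have hdsub := supp_subset_of_mem_bas h hd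
  intro heq
  obtain ⟨x, hx⟩ := S.supp_nonempty d
  exact Set.disjoint_left.mp hdisj hx (heq ▸ hdsub hx)

lemma cube_isVertex [DecidableEq B] (S : SimpleExpansionSet B X) (v₁ v₂ : Finset B)
    (hv₁ : S.IsVertex v₁) (hsub : v₂ ⊆ v₁) (hexp : ∀ b ∈ v₂, S.HasExpansion b)
    {w : Finset B} (hw : w ∈ S.cube v₁ v₂) : S.IsVertex w := by
  obtain ⟨t, ht, rfl⟩ := hw
  have key : ∀ c ∈ (v₁ \ v₂) ∪ (v₂ \ t) ∪ t.biUnion S.Bas,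
      ∃ d ∈ v₁, ((c = d ∧ c ∈ (v₁ \ v₂) ∪ (v₂ \ t)) ∨ (d ∈ t ∧ c ∈ S.Bas d)) := by
    intro c hc
    rcases Finset.mem_union.mp hc with hc1 | hc2
    · rcases Finset.mem_union.mp hc1 with h1 | h2
      · exact ⟨c, (Finset.mem_sdiff.mp h1).1, Or.inl ⟨rfl, hc1⟩⟩
      · exact ⟨c, hsub (Finset.mem_sdiff.mp h2).1, Or.inl ⟨rfl, hc1⟩⟩
    · obtain ⟨d, hdt, hcd⟩ := Finset.mem_biUnion.mp hc2
      exact ⟨d, hsub (ht hdt), Or.inr ⟨hdt, hcd⟩⟩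
  intro c₁ h₁ c₂ h₂ hne
  obtain ⟨d₁, hd₁, hcase₁⟩ := key c₁ h₁
  obtain ⟨d₂, hd₂, hcase₂⟩ := key c₂ h₂
  have hsupp₁ : S.supp c₁ ⊆ S.supp d₁ := by
    rcases hcase₁ with ⟨rfl, _⟩ | ⟨hdt, hcd⟩
    · exact subset_rfl
    · exact supp_subset_of_mem_bas (hexp d₁ (ht hdt)) hcd
  have hsupp₂ : S.supp c₂ ⊆ S.supp d₂ := by
    rcases hcase₂ with ⟨rfl, _⟩ | ⟨hdt, hcd⟩
    · exact subset_rfl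
    · exact supp_subset_of_mem_bas (hexp d₂ (ht hdt)) hcd
  by_cases hdd : d₁ = d₂
  · subst hdd
    rcases hcase₁ with ⟨rfl, hm₁⟩ | ⟨hdt₁, hcd₁⟩
    · rcases hcase₂ with ⟨rfl, _⟩ | ⟨hdt₂, hcd₂⟩
      · exact absurd rfl hne
      · rcases Finset.mem_union.mp hm₁ with h | h
        · exact absurd (ht hdt₂) (Finset.mem_sdiff.mp h).2
        · exact absurd hdt₂ (Finset.mem_sdiff.mp h).2
    · rcases hcase₂ with ⟨rfl, hm₂⟩ | ⟨hdt₂, hcd₂⟩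
      · rcases Finset.mem_union.mp hm₂ with h | h
        · exact absurd (ht hdt₁) (Finset.mem_sdiff.mp h).2
        · exact absurd hdt₁ (Finset.mem_sdiff.mp h).2
      · exact S.proper_disjoint d₁ _ (bas_mem_E (hexp d₁ (ht hdt₁))).1
          (bas_mem_E (hexp d₁ (ht hdt₁))).2 c₁ hcd₁ c₂ hcd₂ hne
  · exact (hv₁ d₁ hd₁ d₂ hd₂ hdd).mono hsupp₁ hsupp₂

end Aux

/-- Intersection lemma: if `b ∈ v₁` and `b ∈ Bas(b')` for some `b' ∈ v₂'`,
then `b ∈ w` for every vertex `w ∈ 𝒞(v₁,v₂) ∩ 𝒞(v₁',v₂')`. -/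
theorem intersection_lemma {B X : Type*} [DecidableEq B] (S : SimpleExpansionSet B X)
    (v₁ v₂ v₁' v₂' : Finset B)
    (hv₁ : S.IsVertex v₁) (hv₁' : S.IsVertex v₁')
    (hsub : v₂ ⊆ v₁) (hsub' : v₂' ⊆ v₁')
    (hexp : ∀ b ∈ v₂, S.HasExpansion b) (hexp' : ∀ b ∈ v₂', S.HasExpansion b)
    (b : B) (hb : b ∈ v₁) (b' : B) (hb' : b' ∈ v₂') (hbas : b ∈ S.Bas b') :
    ∀ w ∈ S.cube v₁ v₂ ∩ S.cube v₁' v₂', b ∈ w := by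
  rintro w ⟨hw1, hw2⟩
  obtain ⟨t, ht, hwe⟩ := hw1
  obtain ⟨t', ht', hwe'⟩ := hw2
  by_cases hbt' : b' ∈ t'
  · rw [hwe']
    exact Finset.mem_union_right _ (Finset.mem_biUnion.mpr ⟨b', hbt', hbas⟩)
  · have hb'w : b' ∈ w := by
      rw [hwe']
      exact Finset.mem_union_left _
        (Finset.mem_union_right _ (Finset.mem_sdiff.mpr ⟨hb', hbt'⟩))
    by_contra hbw
    have hbt : b ∈ t := by
      by_contra hbt
      apply hbw
      rw [hwe]
      by_cases hbv2 : b ∈ v₂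
      · exact Finset.mem_union_left _
          (Finset.mem_union_right _ (Finset.mem_sdiff.mpr ⟨hbv2, hbt⟩))
      · exact Finset.mem_union_left _
          (Finset.mem_union_left _ (Finset.mem_sdiff.mpr ⟨hb, hbv2⟩))
    have hexpb : S.HasExpansion b := hexp b (ht hbt)
    have hcard := S.proper_card b _ (bas_mem_E hexpb).1 (bas_mem_E hexpb).2
    obtain ⟨c, hc⟩ := Finset.card_pos.mp (by omega : 0 < (S.Bas b).card)
    have hcw : c ∈ w := by
      rw [hwe]
      exact Finset.mem_union_right _ (Finset.mem_biUnion.mpr ⟨b, hbt, hc⟩)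
    have hexpb' := hexp' b' hb'
    have hsuppc : S.supp c ⊆ S.supp b := supp_subset_of_mem_bas hexpb hc
    have hsuppb : S.supp b ⊆ S.supp b' := supp_subset_of_mem_bas hexpb' hbas
    have hne : c ≠ b' := by
      rintro rfl
      exact bas_supp_ne hexpb' hbas (Set.Subset.antisymm hsuppb hsuppc)
    have hvert := cube_isVertex S v₁' v₂' hv₁' hsub' hexp' ⟨t', ht', hwe'⟩
    have hdisj := hvert c hcw b' hb'w hne
    obtain ⟨x, hx⟩ := S.supp_nonempty c
    exact Set.disjoint_left.mp hdisj hx (hsuppb (hsuppc hx))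
end

section
/- (Corners of a cube are distinct) Let 𝓑 be a simple expansion set over X, let v₂ ⊆ v₁ be vertices with |ℰ(b)| = 2 for every b ∈ v₂, and let w, w' ⊆ v₂. If (v₁ − v₂) ∪ (v₂ − w) ∪ ⋃_{b ∈ w} Bas(b) = (v₁ − v₂) ∪ (v₂ − w') ∪ ⋃_{b ∈ w'} Bas(b), then w = w'. In particular, the cube 𝒞(v₁,v₂) has exactly 2^{|v₂|} vertices. -/
open SimpleExpansionSet

/-- corners of a cube are distinct, and `𝒞(v₁,v₂)` has exactly `2^{|v₂|}`
vertices. -/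
theorem cube_corners_distinct {B X : Type*} [DecidableEq B] (S : SimpleExpansionSet B X)
    (v₁ v₂ : Finset B) (hv₁ : S.IsVertex v₁) (hsub : v₂ ⊆ v₁)
    (hexp : ∀ b ∈ v₂, S.HasExpansion b) :
    (∀ w ⊆ v₂, ∀ w' ⊆ v₂,
      (v₁ \ v₂) ∪ (v₂ \ w) ∪ w.biUnion S.Bas = (v₁ \ v₂) ∪ (v₂ \ w') ∪ w'.biUnion S.Bas →
      w = w') ∧
    (S.cube v₁ v₂).ncard = 2 ^ v₂.card := by
  classical
  -- basic facts about Bas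
  have hBas : ∀ b : B, S.HasExpansion b → S.Bas b ∈ S.E b ∧ S.Bas b ≠ ({b} : Finset B) := by
    intro b h
    unfold SimpleExpansionSet.Bas
    rw [dif_pos h]
    exact ⟨h.choose_spec.1, h.choose_spec.2⟩
  have hBsupp : ∀ b : B, S.HasExpansion b → (⋃ b' ∈ S.Bas b, S.supp b') = S.supp b := by
    intro b h
    exact S.proper_supp b _ (hBas b h).1 (hBas b h).2
  -- b ∉ Bas b
  have hself : ∀ b : B, S.HasExpansion b → b ∉ S.Bas b := by
    intro b h hb
    have hcard : 2 ≤ (S.Bas b).card := S.proper_card b _ (hBas b h).1 (hBas b h).2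
    obtain ⟨b'', hb'', hne⟩ := Finset.exists_mem_ne (lt_of_lt_of_le one_lt_two hcard) b
    have hdisj : Disjoint (S.supp b'') (S.supp b) :=
      S.proper_disjoint b _ (hBas b h).1 (hBas b h).2 b'' hb'' b hb hne
    have hsubs : S.supp b'' ⊆ S.supp b := by
      rw [← hBsupp b h]
      exact Set.subset_biUnion_of_mem hb''
    obtain ⟨x, hx⟩ := S.supp_nonempty b''
    exact hdisj.ne_of_mem hx (hsubs hx) rfl
  -- b ∉ Bas b' for distinct b, b' ∈ v₁
  have hother : ∀ b ∈ v₁, ∀ b' ∈ v₁, b ≠ b' → S.HasExpansion b' → b ∉ S.Bas b' := by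
    intro b hb b' hb' hne h hmem
    have hsubs : S.supp b ⊆ S.supp b' := by
      rw [← hBsupp b' h]
      exact Set.subset_biUnion_of_mem hmem
    have hdisj : Disjoint (S.supp b) (S.supp b') := hv₁ b hb b' hb' hne
    obtain ⟨x, hx⟩ := S.supp_nonempty b
    exact hdisj.ne_of_mem hx (hsubs hx) rfl
  -- key membership criterion
  have hkey : ∀ w ⊆ v₂, ∀ b ∈ v₂,
      (b ∈ (v₁ \ v₂) ∪ (v₂ \ w) ∪ w.biUnion S.Bas ↔ b ∉ w) := by
    intro w hw b hb
    constructor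
    · intro hmem hbw
      rcases Finset.mem_union.mp hmem with hmem | hmem
      · rcases Finset.mem_union.mp hmem with hmem | hmem
        · exact (Finset.mem_sdiff.mp hmem).2 hb
        · exact (Finset.mem_sdiff.mp hmem).2 hbw
      · obtain ⟨b', hb', hbb'⟩ := Finset.mem_biUnion.mp hmem
        by_cases hbe : b = b'
        · exact hself b (hexp b hb) (hbe ▸ hbb')
        · exact hother b (hsub hb) b' (hsub (hw hb')) hbe (hexp b' (hw hb')) hbb'
    · intro hbw
      exact Finset.mem_union.mpr (Or.inl (Finset.mem_union.mpr (Or.inr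
        (Finset.mem_sdiff.mpr ⟨hb, hbw⟩))))
  have hmain : ∀ w ⊆ v₂, ∀ w' ⊆ v₂,
      (v₁ \ v₂) ∪ (v₂ \ w) ∪ w.biUnion S.Bas = (v₁ \ v₂) ∪ (v₂ \ w') ∪ w'.biUnion S.Bas →
      w = w' := by
    intro w hw w' hw' heq
    ext b
    constructor
    · intro hbw
      by_contra hbw'
      have hb : b ∈ v₂ := hw hbw
      have := (hkey w' hw' b hb).mpr hbw'
      rw [← heq] at this
      exact (hkey w hw b hb).mp this hbw
    · intro hbw'
      by_contra hbw
      have hb : b ∈ v₂ := hw' hbw'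
      have := (hkey w hw b hb).mpr hbw
      rw [heq] at this
      exact (hkey w' hw' b hb).mp this hbw'
  refine ⟨hmain, ?_⟩
  set f : Finset B → Finset B := fun w => (v₁ \ v₂) ∪ (v₂ \ w) ∪ w.biUnion S.Bas with hf
  have himg : S.cube v₁ v₂ = f '' ↑v₂.powerset := by
    ext u
    simp only [SimpleExpansionSet.cube, Set.mem_setOf_eq, Set.mem_image, Finset.coe_powerset,
      Set.mem_preimage, Set.mem_powerset_iff, Finset.coe_subset, hf]
    constructor
    · rintro ⟨w, hw, rfl⟩; exact ⟨w, hw, rfl⟩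
    · rintro ⟨w, hw, rfl⟩; exact ⟨w, hw, rfl⟩
  have hinj : Set.InjOn f ↑v₂.powerset := by
    intro w hw w' hw' h
    exact hmain w (Finset.mem_powerset.mp hw) w' (Finset.mem_powerset.mp hw') h
  rw [himg, Set.ncard_image_of_injOn hinj, Set.ncard_coe_finset, Finset.card_powerset]
end

section
/- (Intersection of cubes is a cube) Let 𝓑 be a simple expansion set over X and let 𝒞(v₁,v₂) and 𝒞(v₁',v₂') be cubes with 𝒞(v₁,v₂) ∩ 𝒞(v₁',v₂') ≠ ∅. Then there exist vertices v₄ ⊆ v₃ with |ℰ(b)| = 2 for every b ∈ v₄ such that 𝒞(v₁,v₂) ∩ 𝒞(v₁',v₂') = 𝒞(v₃,v₄). Moreover one may take v₃ = v̂ to be a vertex of minimal cardinality in the intersection, writing v̂ = (v₁ − ṽ₂) ∪ ⋃_{b ∈ ṽ₂} Bas(b) = (v₁' − ṽ₂') ∪ ⋃_{b' ∈ ṽ₂'} Bas(b') with ṽ₂ ⊆ v₂ and ṽ₂' ⊆ v₂', and v₄ = (v₂ − ṽ₂) ∩ (v₂' − ṽ₂'). -/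
set_option linter.unusedSectionVars false

namespace SimpleExpansionSet

variable {B X : Type*} [DecidableEq B] (S : SimpleExpansionSet B X)

lemma bas_spec {b : B} (h : S.HasExpansion b) :
    S.Bas b ∈ S.E b ∧ S.Bas b ≠ ({b} : Finset B) := by
  unfold Bas
  rw [dif_pos h]
  exact ⟨h.choose_spec.1, h.choose_spec.2⟩

lemma bas_disjoint {b : B} (h : S.HasExpansion b) {c₁ c₂ : B}
    (h1 : c₁ ∈ S.Bas b) (h2 : c₂ ∈ S.Bas b) (hne : c₁ ≠ c₂) :
    Disjoint (S.supp c₁) (S.supp c₂) :=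
  S.proper_disjoint b _ (S.bas_spec h).1 (S.bas_spec h).2 c₁ h1 c₂ h2 hne

lemma two_le_card_bas {b : B} (h : S.HasExpansion b) : 2 ≤ (S.Bas b).card :=
  S.proper_card b _ (S.bas_spec h).1 (S.bas_spec h).2

lemma supp_bas_union {b : B} (h : S.HasExpansion b) :
    (⋃ c ∈ S.Bas b, S.supp c) = S.supp b :=
  S.proper_supp b _ (S.bas_spec h).1 (S.bas_spec h).2

lemma supp_bas_subset {b c : B} (h : S.HasExpansion b) (hc : c ∈ S.Bas b) :
    S.supp c ⊆ S.supp b := by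
  rw [← S.supp_bas_union h]
  exact Set.subset_biUnion_of_mem hc

lemma supp_bas_cover {b : B} (h : S.HasExpansion b) {p : X} (hp : p ∈ S.supp b) :
    ∃ e ∈ S.Bas b, p ∈ S.supp e := by
  rw [← S.supp_bas_union h] at hp
  simpa using hp

lemma supp_bas_ne {b c : B} (h : S.HasExpansion b) (hc : c ∈ S.Bas b) :
    S.supp c ≠ S.supp b := by
  intro heq
  obtain ⟨c₂, hc₂, hne⟩ := Finset.exists_mem_ne
    (lt_of_lt_of_le one_lt_two (S.two_le_card_bas h)) c
  have hdisj := S.bas_disjoint h hc₂ hc hne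
  obtain ⟨p, hp⟩ := S.supp_nonempty c₂
  exact Set.disjoint_left.1 hdisj hp (heq ▸ S.supp_bas_subset h hc₂ hp)

lemma mem_bas_ne {b c : B} (h : S.HasExpansion b) (hc : c ∈ S.Bas b) : c ≠ b := by
  intro heq
  exact S.supp_bas_ne h hc (by rw [heq])

lemma bas_not_mem_vertex {v : Finset B} (hv : S.IsVertex v) {b c : B} (hb : b ∈ v)
    (h : S.HasExpansion b) (hc : c ∈ S.Bas b) : c ∉ v := by
  intro hcv
  have hdisj := hv c hcv b hb (S.mem_bas_ne h hc)
  obtain ⟨p, hp⟩ := S.supp_nonempty c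
  exact Set.disjoint_left.1 hdisj hp (S.supp_bas_subset h hc hp)

/-- The element of the cube `𝒞(v, ·)` obtained by expanding exactly the members of `w`. -/
noncomputable def expand (v w : Finset B) : Finset B := (v \ w) ∪ w.biUnion S.Bas

lemma sdiff_helper {v₁ v₂ w : Finset B} (h1 : w ⊆ v₂) (h2 : v₂ ⊆ v₁) :
    (v₁ \ v₂) ∪ (v₂ \ w) = v₁ \ w := by
  ext a
  simp only [Finset.mem_union, Finset.mem_sdiff]
  constructor
  · rintro (⟨ha, hb⟩ | ⟨ha, hb⟩)
    · exact ⟨ha, fun hw => hb (h1 hw)⟩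
    · exact ⟨h2 ha, hb⟩
  · rintro ⟨ha, hb⟩
    by_cases hv : a ∈ v₂
    · exact Or.inr ⟨hv, hb⟩
    · exact Or.inl ⟨ha, hv⟩

lemma mem_cube_iff {v₁ v₂ u : Finset B} (h : v₂ ⊆ v₁) :
    u ∈ S.cube v₁ v₂ ↔ ∃ w ⊆ v₂, u = S.expand v₁ w := by
  constructor
  · rintro ⟨w, hw, rfl⟩
    exact ⟨w, hw, by rw [expand, ← sdiff_helper hw h]⟩
  · rintro ⟨w, hw, rfl⟩
    exact ⟨w, hw, by rw [expand, ← sdiff_helper hw h]⟩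

end SimpleExpansionSet

namespace SimpleExpansionSet

variable {B X : Type*} [DecidableEq B] (S : SimpleExpansionSet B X)

lemma bas_subset_expand {v w : Finset B} {b : B} (hb : b ∈ w) :
    S.Bas b ⊆ S.expand v w := fun c hc =>
  Finset.mem_union_right _ (Finset.mem_biUnion.2 ⟨b, hb, hc⟩)

lemma mem_expand_of_not_mem {v w : Finset B} {b : B} (hb : b ∈ v) (hbw : b ∉ w) :
    b ∈ S.expand v w :=
  Finset.mem_union_left _ (Finset.mem_sdiff.2 ⟨hb, hbw⟩)

/-- An element of the ambient vertex never appears in a basin of the expansion. -/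
lemma not_mem_biUnion_bas {v₁ v₂ w : Finset B} (hv₁ : S.IsVertex v₁) (hsub : v₂ ⊆ v₁)
    (hexp : ∀ b ∈ v₂, S.HasExpansion b) (hw : w ⊆ v₂) {c : B} (hc : c ∈ v₁) :
    c ∉ w.biUnion S.Bas := by
  intro h
  obtain ⟨b, hb, hcb⟩ := Finset.mem_biUnion.1 h
  exact S.bas_not_mem_vertex hv₁ (hsub (hw hb)) (hexp b (hw hb)) hcb hc

lemma vertex_mem_expand_iff {v₁ v₂ w : Finset B} (hv₁ : S.IsVertex v₁) (hsub : v₂ ⊆ v₁)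
    (hexp : ∀ b ∈ v₂, S.HasExpansion b) (hw : w ⊆ v₂) {b : B} (hb : b ∈ v₁) :
    b ∈ S.expand v₁ w ↔ b ∉ w := by
  constructor
  · intro h hbw
    rcases Finset.mem_union.1 h with h | h
    · exact (Finset.mem_sdiff.1 h).2 hbw
    · exact S.not_mem_biUnion_bas hv₁ hsub hexp hw hb h
  · exact S.mem_expand_of_not_mem hb

/-- If two basins (over distinct elements of a vertex) share an element, the bases agree. -/
lemma bas_inj {v₁ v₂ : Finset B} (hv₁ : S.IsVertex v₁) (hsub : v₂ ⊆ v₁)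
    (hexp : ∀ b ∈ v₂, S.HasExpansion b) {b₁ b₂ c : B} (hb₁ : b₁ ∈ v₂) (hb₂ : b₂ ∈ v₂)
    (hc₁ : c ∈ S.Bas b₁) (hc₂ : c ∈ S.Bas b₂) : b₁ = b₂ := by
  by_contra hne
  have hdisj := hv₁ b₁ (hsub hb₁) b₂ (hsub hb₂) hne
  obtain ⟨p, hp⟩ := S.supp_nonempty c
  exact Set.disjoint_left.1 hdisj (S.supp_bas_subset (hexp b₁ hb₁) hc₁ hp)
    (S.supp_bas_subset (hexp b₂ hb₂) hc₂ hp)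

lemma isVertex_expand {v₁ v₂ w : Finset B} (hv₁ : S.IsVertex v₁) (hsub : v₂ ⊆ v₁)
    (hexp : ∀ b ∈ v₂, S.HasExpansion b) (hw : w ⊆ v₂) :
    S.IsVertex (S.expand v₁ w) := by
  intro c₁ h₁ c₂ h₂ hne
  have key : ∀ c ∈ S.expand v₁ w, ∃ b ∈ v₁, S.supp c ⊆ S.supp b ∧
      (c = b ∧ c ∈ v₁ \ w ∨ ∃ b' ∈ w, c ∈ S.Bas b' ∧ b = b') := by
    intro c hc
    rcases Finset.mem_union.1 hc with h | h
    · exact ⟨c, (Finset.mem_sdiff.1 h).1, subset_rfl, Or.inl ⟨rfl, h⟩⟩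
    · obtain ⟨b, hb, hcb⟩ := Finset.mem_biUnion.1 h
      exact ⟨b, hsub (hw hb), S.supp_bas_subset (hexp b (hw hb)) hcb, Or.inr ⟨b, hb, hcb, rfl⟩⟩
  obtain ⟨b₁, hb₁, hs₁, hk₁⟩ := key c₁ h₁
  obtain ⟨b₂, hb₂, hs₂, hk₂⟩ := key c₂ h₂
  by_cases hbb : b₁ = b₂
  · subst hbb
    -- same base: impossible unless both in the same basin
    rcases hk₁ with ⟨he₁, hm₁⟩ | ⟨b', hb', hcb', he₁⟩ <;>
      rcases hk₂ with ⟨he₂, hm₂⟩ | ⟨b'', hb'', hcb'', he₂⟩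
    · exact absurd (he₁.trans he₂.symm) hne
    · exact absurd (show c₁ ∈ w by rw [he₁, he₂]; exact hb'') (Finset.mem_sdiff.1 hm₁).2
    · exact absurd (show c₂ ∈ w by rw [he₂, he₁]; exact hb') (Finset.mem_sdiff.1 hm₂).2
    · have hcb2 : c₂ ∈ S.Bas b' := by rw [he₁.symm.trans he₂]; exact hcb''
      exact S.bas_disjoint (hexp b' (hw hb')) hcb' hcb2 hne
  · exact Set.disjoint_of_subset hs₁ hs₂ (hv₁ b₁ hb₁ b₂ hb₂ hbb)

lemma expand_card {v₁ v₂ w : Finset B} (hv₁ : S.IsVertex v₁) (hsub : v₂ ⊆ v₁)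
    (hexp : ∀ b ∈ v₂, S.HasExpansion b) (hw : w ⊆ v₂) :
    (S.expand v₁ w).card + w.card = v₁.card + ∑ b ∈ w, (S.Bas b).card := by
  have hdisj : Disjoint (v₁ \ w) (w.biUnion S.Bas) := by
    rw [Finset.disjoint_left]
    intro c hc
    exact S.not_mem_biUnion_bas hv₁ hsub hexp hw (Finset.mem_sdiff.1 hc).1
  have hbi : (w.biUnion S.Bas).card = ∑ b ∈ w, (S.Bas b).card := by
    apply Finset.card_biUnion
    intro b₁ h₁ b₂ h₂ hne
    show Disjoint (S.Bas b₁) (S.Bas b₂)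
    rw [Finset.disjoint_left]
    intro c hc₁ hc₂
    exact hne (S.bas_inj hv₁ hsub hexp (hw h₁) (hw h₂) hc₁ hc₂)
  rw [expand, Finset.card_union_of_disjoint hdisj, hbi,
    Finset.card_sdiff_of_subset (hw.trans hsub)]
  have := Finset.card_le_card (hw.trans hsub)
  omega

lemma expand_expand {v₁ v₂ t s : Finset B} (hv₁ : S.IsVertex v₁) (hsub : v₂ ⊆ v₁)
    (hexp : ∀ b ∈ v₂, S.HasExpansion b) (ht : t ⊆ v₂) (hs : s ⊆ v₂) :
    (S.expand v₁ t \ s) ∪ s.biUnion S.Bas = S.expand v₁ (t ∪ s) := by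
  ext a
  simp only [expand, Finset.mem_union, Finset.mem_sdiff, Finset.mem_biUnion]
  constructor
  · rintro (⟨(⟨ha, hat⟩ | ⟨b, hb, hab⟩), has⟩ | ⟨b, hb, hab⟩)
    · exact Or.inl ⟨ha, fun h => h.elim hat has⟩
    · exact Or.inr ⟨b, Or.inl hb, hab⟩
    · exact Or.inr ⟨b, Or.inr hb, hab⟩
  · rintro (⟨ha, hts⟩ | ⟨b, hb, hab⟩)
    · exact Or.inl ⟨Or.inl ⟨ha, fun h => hts (Or.inl h)⟩, fun h => hts (Or.inr h)⟩
    · have hbv₂ : b ∈ v₂ := hb.elim (fun h => ht h) (fun h => hs h)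
      have hav₁ : a ∉ v₁ := fun hav₁ =>
        S.bas_not_mem_vertex hv₁ (hsub hbv₂) (hexp _ hbv₂) hab hav₁
      rcases hb with hbt | hbs
      · exact Or.inl ⟨Or.inr ⟨b, hbt, hab⟩, fun h => hav₁ (hsub (hs h))⟩
      · exact Or.inr ⟨b, hbs, hab⟩

end SimpleExpansionSet

namespace SimpleExpansionSet

variable {B X : Type*} [DecidableEq B] (S : SimpleExpansionSet B X)

/-- Key bridging lemma: if `x, y` lie in both cubes, `c ∈ x \ y` and `c ∈ v₁`,
then `c ∈ v₁'`. -/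
lemma cross {v₁ v₂ v₁' v₂' wx wy wx' wy' : Finset B}
    (hv₁ : S.IsVertex v₁) (hsub : v₂ ⊆ v₁) (hsub' : v₂' ⊆ v₁')
    (hexp : ∀ b ∈ v₂, S.HasExpansion b) (hexp' : ∀ b ∈ v₂', S.HasExpansion b)
    (hwx' : wx' ⊆ v₂') (hwy : wy ⊆ v₂) (hwy' : wy' ⊆ v₂')
    (hx : S.expand v₁ wx = S.expand v₁' wx') (hy : S.expand v₁ wy = S.expand v₁' wy')
    {c : B} (hc1 : c ∈ S.expand v₁ wx) (hc2 : c ∉ S.expand v₁ wy) (hcv : c ∈ v₁) :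
    c ∈ v₁' := by
  have hcwy : c ∈ wy := by
    by_contra h
    exact hc2 (S.mem_expand_of_not_mem hcv h)
  have hce : S.HasExpansion c := hexp c (hwy hcwy)
  obtain ⟨d, hd⟩ : (S.Bas c).Nonempty :=
    Finset.card_pos.1 (lt_of_lt_of_le two_pos (S.two_le_card_bas hce))
  have hdy : d ∈ S.expand v₁ wy := S.bas_subset_expand hcwy hd
  rw [hx] at hc1
  rcases Finset.mem_union.1 hc1 with h | h
  · exact (Finset.mem_sdiff.1 h).1
  · exfalso
    obtain ⟨b', hb'x, hcb'⟩ := Finset.mem_biUnion.1 h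
    have hb'v₂' : b' ∈ v₂' := hwx' hb'x
    have hb'e : S.HasExpansion b' := hexp' _ hb'v₂'
    have hsuppc : S.supp c ⊆ S.supp b' := S.supp_bas_subset hb'e hcb'
    have hsuppcne : S.supp c ≠ S.supp b' := S.supp_bas_ne hb'e hcb'
    have hsuppd : S.supp d ⊆ S.supp c := S.supp_bas_subset hce hd
    have hvy : S.IsVertex (S.expand v₁ wy) := S.isVertex_expand hv₁ hsub hexp hwy
    obtain ⟨p, hp⟩ := S.supp_nonempty d
    by_cases hb'wy' : b' ∈ wy'
    · obtain ⟨e, he, hpe⟩ := S.supp_bas_cover hb'e (hsuppc (hsuppd hp))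
      have hey : e ∈ S.expand v₁ wy := by
        rw [hy]; exact S.bas_subset_expand hb'wy' he
      by_cases hde : d = e
      · subst hde
        have hdc : d ≠ c := S.mem_bas_ne hce hd
        exact Set.disjoint_left.1 (S.bas_disjoint hb'e he hcb' hdc) hp (hsuppd hp)
      · exact Set.disjoint_left.1 (hvy d hdy e hey hde) hp hpe
    · have hb'y : b' ∈ S.expand v₁ wy := by
        rw [hy]; exact S.mem_expand_of_not_mem (hsub' hb'v₂') hb'wy'
      have hdb' : d ≠ b' := by
        intro h; subst h
        exact hsuppcne (Set.Subset.antisymm hsuppc hsuppd)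
      exact Set.disjoint_left.1 (hvy d hdy b' hb'y hdb') hp (hsuppc (hsuppd hp))

/-- The "meet" of two common elements of two cubes is a common element (one inclusion). -/
lemma meet_subset {v₁ v₂ v₁' v₂' w tw w' tw' : Finset B}
    (hv₁ : S.IsVertex v₁) (hv₁' : S.IsVertex v₁')
    (hsub : v₂ ⊆ v₁) (hsub' : v₂' ⊆ v₁')
    (hexp : ∀ b ∈ v₂, S.HasExpansion b) (hexp' : ∀ b ∈ v₂', S.HasExpansion b)
    (hw : w ⊆ v₂) (htw : tw ⊆ v₂) (hw' : w' ⊆ v₂') (htw' : tw' ⊆ v₂')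
    (hu : S.expand v₁ w = S.expand v₁' w') (hv : S.expand v₁ tw = S.expand v₁' tw') :
    S.expand v₁ (w ∩ tw) ⊆ S.expand v₁' (w' ∩ tw') := by
  intro a ha
  rcases Finset.mem_union.1 ha with h | h
  · -- a ∈ v₁ \ (w ∩ tw)
    obtain ⟨hav₁, haw⟩ := Finset.mem_sdiff.1 h
    rw [Finset.mem_inter] at haw
    push_neg at haw
    by_cases hav₁' : a ∈ v₁'
    · -- then a avoids w' or tw'
      refine S.mem_expand_of_not_mem hav₁' ?_
      rw [Finset.mem_inter]
      rintro ⟨haw', hatw'⟩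
      by_cases haw₁ : a ∈ w
      · -- a ∉ tw, so a ∈ vhat, but a ∈ tw' says a ∉ vhat'
        have h1 : a ∈ S.expand v₁ tw := S.mem_expand_of_not_mem hav₁ (haw haw₁)
        rw [hv] at h1
        exact (S.vertex_mem_expand_iff hv₁' hsub' hexp' htw' hav₁').1 h1 hatw'
      · have h1 : a ∈ S.expand v₁ w := S.mem_expand_of_not_mem hav₁ haw₁
        rw [hu] at h1
        exact (S.vertex_mem_expand_iff hv₁' hsub' hexp' hw' hav₁').1 h1 haw'
    · -- a ∉ v₁' : a must lie in a common basin
      by_cases haw₁ : a ∈ w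
      · -- then a ∉ tw, so a ∈ expand v₁ tw, a ∉ expand v₁ w; cross gives a ∈ v₁', contra
        have h1 : a ∈ S.expand v₁ tw := S.mem_expand_of_not_mem hav₁ (haw haw₁)
        have h2 : a ∉ S.expand v₁ w :=
          fun h => ((S.vertex_mem_expand_iff hv₁ hsub hexp hw hav₁).1 h) haw₁
        exact absurd (S.cross hv₁ hsub hsub' hexp hexp' htw' hw hw' hv hu h1 h2 hav₁) hav₁'
      · by_cases hatw₁ : a ∈ tw
        · have h1 : a ∈ S.expand v₁ w := S.mem_expand_of_not_mem hav₁ haw₁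
          have h2 : a ∉ S.expand v₁ tw :=
            fun h => ((S.vertex_mem_expand_iff hv₁ hsub hexp htw hav₁).1 h) hatw₁
          exact absurd (S.cross hv₁ hsub hsub' hexp hexp' hw' htw htw' hu hv h1 h2 hav₁) hav₁'
        · -- a in both u and vhat but not v₁': common basin element
          have h1 : a ∈ S.expand v₁' w' := by
            rw [← hu]; exact S.mem_expand_of_not_mem hav₁ haw₁
          have h2 : a ∈ S.expand v₁' tw' := by
            rw [← hv]; exact S.mem_expand_of_not_mem hav₁ hatw₁
          rcases Finset.mem_union.1 h1 with h1' | h1'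
          · exact absurd (Finset.mem_sdiff.1 h1').1 hav₁'
          rcases Finset.mem_union.1 h2 with h2' | h2'
          · exact absurd (Finset.mem_sdiff.1 h2').1 hav₁'
          obtain ⟨b₁, hb₁, hab₁⟩ := Finset.mem_biUnion.1 h1'
          obtain ⟨b₂, hb₂, hab₂⟩ := Finset.mem_biUnion.1 h2'
          have hbe : b₁ = b₂ := S.bas_inj hv₁' hsub' hexp' (hw' hb₁) (htw' hb₂) hab₁ hab₂
          exact S.bas_subset_expand (Finset.mem_inter.2 ⟨hb₁, hbe ▸ hb₂⟩) hab₁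
  · -- a in a basin over w ∩ tw : a ∈ u ∩ vhat
    obtain ⟨b, hb, hab⟩ := Finset.mem_biUnion.1 h
    rw [Finset.mem_inter] at hb
    have h1 : a ∈ S.expand v₁' w' := by rw [← hu]; exact S.bas_subset_expand hb.1 hab
    have h2 : a ∈ S.expand v₁' tw' := by rw [← hv]; exact S.bas_subset_expand hb.2 hab
    have hav₁ : a ∉ v₁ :=
      S.bas_not_mem_vertex hv₁ (hsub (hw hb.1)) (hexp _ (hw hb.1)) hab
    by_cases hav₁' : a ∈ v₁'
    · refine S.mem_expand_of_not_mem hav₁' ?_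
      rw [Finset.mem_inter]
      rintro ⟨haw', _⟩
      exact (S.vertex_mem_expand_iff hv₁' hsub' hexp' hw' hav₁').1 h1 haw'
    · rcases Finset.mem_union.1 h1 with h1' | h1'
      · exact absurd (Finset.mem_sdiff.1 h1').1 hav₁'
      rcases Finset.mem_union.1 h2 with h2' | h2'
      · exact absurd (Finset.mem_sdiff.1 h2').1 hav₁'
      obtain ⟨b₁, hb₁, hab₁⟩ := Finset.mem_biUnion.1 h1'
      obtain ⟨b₂, hb₂, hab₂⟩ := Finset.mem_biUnion.1 h2'
      have hbe : b₁ = b₂ := S.bas_inj hv₁' hsub' hexp' (hw' hb₁) (htw' hb₂) hab₁ hab₂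
      exact S.bas_subset_expand (Finset.mem_inter.2 ⟨hb₁, hbe ▸ hb₂⟩) hab₁

end SimpleExpansionSet


open SimpleExpansionSet

/-- a nonempty intersection of cubes is a cube; one may take the minimal
vertex `v̂` and `v₄ = (v₂ − ṽ₂) ∩ (v₂' − ṽ₂')`. -/
theorem cube_inter_cube {B X : Type*} [DecidableEq B] (S : SimpleExpansionSet B X)
    (v₁ v₂ v₁' v₂' : Finset B)
    (hv₁ : S.IsVertex v₁) (hv₁' : S.IsVertex v₁')
    (hsub : v₂ ⊆ v₁) (hsub' : v₂' ⊆ v₁')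
    (hexp : ∀ b ∈ v₂, S.HasExpansion b) (hexp' : ∀ b ∈ v₂', S.HasExpansion b)
    (vhat tv₂ tv₂' : Finset B)
    (hvhat : vhat ∈ S.cube v₁ v₂ ∩ S.cube v₁' v₂')
    (hmin : ∀ u ∈ S.cube v₁ v₂ ∩ S.cube v₁' v₂', vhat.card ≤ u.card)
    (htv : tv₂ ⊆ v₂) (htv' : tv₂' ⊆ v₂')
    (hrep : vhat = (v₁ \ tv₂) ∪ tv₂.biUnion S.Bas)
    (hrep' : vhat = (v₁' \ tv₂') ∪ tv₂'.biUnion S.Bas) :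
    (∃ v₃ v₄ : Finset B, v₄ ⊆ v₃ ∧ S.IsVertex v₃ ∧ (∀ b ∈ v₄, S.HasExpansion b) ∧
      S.cube v₁ v₂ ∩ S.cube v₁' v₂' = S.cube v₃ v₄) ∧
    S.cube v₁ v₂ ∩ S.cube v₁' v₂' = S.cube vhat ((v₂ \ tv₂) ∩ (v₂' \ tv₂')) := by
  clear hvhat
  have hvhat1 : vhat = S.expand v₁ tv₂ := hrep
  have hvhat2 : vhat = S.expand v₁' tv₂' := hrep'
  have hveq : S.expand v₁ tv₂ = S.expand v₁' tv₂' := hvhat1.symm.trans hvhat2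
  set v₄ : Finset B := (v₂ \ tv₂) ∩ (v₂' \ tv₂') with hv₄def
  have hv₄2 : v₄ ⊆ v₂ := (Finset.inter_subset_left).trans (Finset.sdiff_subset)
  have hv₄2' : v₄ ⊆ v₂' := (Finset.inter_subset_right).trans (Finset.sdiff_subset)
  have hv₄vhat : v₄ ⊆ vhat := by
    intro c hc
    have h1 := Finset.mem_sdiff.1 (Finset.mem_inter.1 hc).1
    rw [hvhat1]
    exact S.mem_expand_of_not_mem (hsub h1.1) h1.2
  have key : S.cube v₁ v₂ ∩ S.cube v₁' v₂' = S.cube vhat v₄ := by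
    ext u
    constructor
    · rintro ⟨h1, h2⟩
      obtain ⟨w, hw, hu1⟩ := (S.mem_cube_iff hsub).1 h1
      obtain ⟨w', hw', hu2⟩ := (S.mem_cube_iff hsub').1 h2
      have hue : S.expand v₁ w = S.expand v₁' w' := hu1.symm.trans hu2
      have hwtv : w ∩ tv₂ ⊆ v₂ := (Finset.inter_subset_left).trans hw
      have hwtv' : w' ∩ tv₂' ⊆ v₂' := (Finset.inter_subset_left).trans hw'
      -- meet of u and vhat is in both cubes
      have hmeet : S.expand v₁ (w ∩ tv₂) = S.expand v₁' (w' ∩ tv₂') :=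
        Finset.Subset.antisymm
          (S.meet_subset hv₁ hv₁' hsub hsub' hexp hexp' hw htv hw' htv' hue hveq)
          (S.meet_subset hv₁' hv₁ hsub' hsub hexp' hexp hw' htv' hw htv hue.symm hveq.symm)
      have hmmem : S.expand v₁ (w ∩ tv₂) ∈ S.cube v₁ v₂ ∩ S.cube v₁' v₂' :=
        ⟨(S.mem_cube_iff hsub).2 ⟨w ∩ tv₂, hwtv, rfl⟩,
         (S.mem_cube_iff hsub').2 ⟨w' ∩ tv₂', hwtv', hmeet⟩⟩
      have hcard := hmin _ hmmem
      -- minimality forces tv₂ ⊆ w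
      have hstep : tv₂ ⊆ w := by
        rw [hvhat1] at hcard
        have h1c := S.expand_card hv₁ hsub hexp htv
        have h2c := S.expand_card hv₁ hsub hexp hwtv
        have hsum : ∑ b ∈ tv₂ \ (w ∩ tv₂), (S.Bas b).card
            + ∑ b ∈ w ∩ tv₂, (S.Bas b).card = ∑ b ∈ tv₂, (S.Bas b).card :=
          Finset.sum_sdiff (Finset.inter_subset_right (s₁ := w) (s₂ := tv₂))
        have hcards := Finset.card_sdiff_add_card_eq_card
          (Finset.inter_subset_right (s₁ := w) (s₂ := tv₂))
        have hle : (tv₂ \ (w ∩ tv₂)).card * 2 ≤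
            ∑ b ∈ tv₂ \ (w ∩ tv₂), (S.Bas b).card := by
          calc (tv₂ \ (w ∩ tv₂)).card * 2 = ∑ _b ∈ tv₂ \ (w ∩ tv₂), 2 := by
                rw [Finset.sum_const, smul_eq_mul]
            _ ≤ _ := Finset.sum_le_sum fun b hb =>
                S.two_le_card_bas (hexp b (htv (Finset.mem_sdiff.1 hb).1))
        have hzero : (tv₂ \ (w ∩ tv₂)).card = 0 := by omega
        have := Finset.sdiff_eq_empty_iff_subset.1 (Finset.card_eq_zero.1 hzero)
        exact fun b hb => (Finset.mem_inter.1 (this hb)).1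
      have hstep' : tv₂' ⊆ w' := by
        rw [hvhat2, hmeet] at hcard
        have h1c := S.expand_card hv₁' hsub' hexp' htv'
        have h2c := S.expand_card hv₁' hsub' hexp' hwtv'
        have hsum : ∑ b ∈ tv₂' \ (w' ∩ tv₂'), (S.Bas b).card
            + ∑ b ∈ w' ∩ tv₂', (S.Bas b).card = ∑ b ∈ tv₂', (S.Bas b).card :=
          Finset.sum_sdiff (Finset.inter_subset_right (s₁ := w') (s₂ := tv₂'))
        have hcards := Finset.card_sdiff_add_card_eq_card
          (Finset.inter_subset_right (s₁ := w') (s₂ := tv₂'))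
        have hle : (tv₂' \ (w' ∩ tv₂')).card * 2 ≤
            ∑ b ∈ tv₂' \ (w' ∩ tv₂'), (S.Bas b).card := by
          calc (tv₂' \ (w' ∩ tv₂')).card * 2 = ∑ _b ∈ tv₂' \ (w' ∩ tv₂'), 2 := by
                rw [Finset.sum_const, smul_eq_mul]
            _ ≤ _ := Finset.sum_le_sum fun b hb =>
                S.two_le_card_bas (hexp' b (htv' (Finset.mem_sdiff.1 hb).1))
        have hzero : (tv₂' \ (w' ∩ tv₂')).card = 0 := by omega
        have := Finset.sdiff_eq_empty_iff_subset.1 (Finset.card_eq_zero.1 hzero)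
        exact fun b hb => (Finset.mem_inter.1 (this hb)).1
      -- the residual parameters agree
      have hseq : w \ tv₂ = w' \ tv₂' := by
        ext c
        constructor
        · intro hc
          obtain ⟨hcw, hctv⟩ := Finset.mem_sdiff.1 hc
          have hcv₁ : c ∈ v₁ := hsub (hw hcw)
          have hcu : c ∉ S.expand v₁ w :=
            fun h => (S.vertex_mem_expand_iff hv₁ hsub hexp hw hcv₁).1 h hcw
          have hcvhat : c ∈ S.expand v₁ tv₂ := S.mem_expand_of_not_mem hcv₁ hctv
          have hcv₁' : c ∈ v₁' :=
            S.cross hv₁ hsub hsub' hexp hexp' htv' hw hw' hveq hue hcvhat hcu hcv₁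
          refine Finset.mem_sdiff.2 ⟨?_, ?_⟩
          · by_contra hcw'
            exact hcu (hue ▸ S.mem_expand_of_not_mem hcv₁' hcw')
          · intro hctv'
            exact (S.vertex_mem_expand_iff hv₁' hsub' hexp' htv' hcv₁').1
              (hveq ▸ hcvhat) hctv'
        · intro hc
          obtain ⟨hcw, hctv⟩ := Finset.mem_sdiff.1 hc
          have hcv₁' : c ∈ v₁' := hsub' (hw' hcw)
          have hcu : c ∉ S.expand v₁' w' :=
            fun h => (S.vertex_mem_expand_iff hv₁' hsub' hexp' hw' hcv₁').1 h hcw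
          have hcvhat : c ∈ S.expand v₁' tv₂' := S.mem_expand_of_not_mem hcv₁' hctv
          have hcv₁ : c ∈ v₁ :=
            S.cross hv₁' hsub' hsub hexp' hexp htv hw' hw hveq.symm hue.symm hcvhat
              (fun h => hcu (hue ▸ h)) hcv₁'
          refine Finset.mem_sdiff.2 ⟨?_, ?_⟩
          · by_contra hcw₀
            exact hcu (hue ▸ S.mem_expand_of_not_mem hcv₁ hcw₀)
          · intro hctv₀
            exact (S.vertex_mem_expand_iff hv₁ hsub hexp htv hcv₁).1
              (hveq.symm ▸ hcvhat) hctv₀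
      have hs₄ : w \ tv₂ ⊆ v₄ := by
        refine Finset.subset_inter ?_ ?_
        · exact fun c hc => Finset.mem_sdiff.2
            ⟨hw (Finset.mem_sdiff.1 hc).1, (Finset.mem_sdiff.1 hc).2⟩
        · rw [hseq]
          exact fun c hc => Finset.mem_sdiff.2
            ⟨hw' (Finset.mem_sdiff.1 hc).1, (Finset.mem_sdiff.1 hc).2⟩
      refine (S.mem_cube_iff hv₄vhat).2 ⟨w \ tv₂, hs₄, ?_⟩
      have : S.expand vhat (w \ tv₂) = S.expand v₁ (tv₂ ∪ (w \ tv₂)) := by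
        rw [hvhat1]
        exact S.expand_expand hv₁ hsub hexp htv ((Finset.sdiff_subset).trans hw)
      rw [this, Finset.union_sdiff_of_subset hstep, hu1]
    · intro h
      obtain ⟨s, hs, hu⟩ := (S.mem_cube_iff hv₄vhat).1 h
      have hs2 : s ⊆ v₂ := hs.trans hv₄2
      have hs2' : s ⊆ v₂' := hs.trans hv₄2'
      have he1 : S.expand vhat s = S.expand v₁ (tv₂ ∪ s) := by
        rw [hvhat1]
        exact S.expand_expand hv₁ hsub hexp htv hs2
      have he2 : S.expand vhat s = S.expand v₁' (tv₂' ∪ s) := by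
        rw [hvhat2]
        exact S.expand_expand hv₁' hsub' hexp' htv' hs2'
      exact ⟨(S.mem_cube_iff hsub).2 ⟨tv₂ ∪ s, Finset.union_subset htv hs2,
          hu.trans he1⟩,
        (S.mem_cube_iff hsub').2 ⟨tv₂' ∪ s, Finset.union_subset htv' hs2',
          hu.trans he2⟩⟩
  refine ⟨⟨vhat, v₄, hv₄vhat, ?_, fun b hb => hexp b (hv₄2 hb), key⟩, key⟩
  rw [hvhat1]
  exact S.isVertex_expand hv₁ hsub hexp htv
end

section
/- (Disjoint basins) Let 𝓑 be a simple expansion set over X, let v be a full-support vertex, and let v_i ≠ v_j be full-support vertices, each joined to v by a cubical edge, with basins B_i and B_j relative to v. If v, v_i, v_j are all vertices of a common 2-dimensional cube 𝒞(v',v'') (with |v''| = 2), then B_i ∩ B_j = ∅. -/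
namespace SimpleExpansionSet

variable {B X : Type*}

namespace Aux

variable {B X : Type*}

lemma bas_mem (S : SimpleExpansionSet B X) {b : B} (h : S.HasExpansion b) :
    S.Bas b ∈ S.E b ∧ S.Bas b ≠ {b} := by
  unfold Bas
  rw [dif_pos h]
  exact h.choose_spec

lemma bas_supp (S : SimpleExpansionSet B X) {b : B} (h : S.HasExpansion b)
    {c : B} (hc : c ∈ S.Bas b) : S.supp c ⊆ S.supp b := by
  have h2 := bas_mem S h
  have h3 := S.proper_supp b _ h2.1 h2.2
  rw [← h3]
  exact Set.subset_biUnion_of_mem hc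

lemma bas_card (S : SimpleExpansionSet B X) {b : B} (h : S.HasExpansion b) :
    2 ≤ (S.Bas b).card :=
  S.proper_card b _ (bas_mem S h).1 (bas_mem S h).2

lemma bas_disj (S : SimpleExpansionSet B X) {b : B} (h : S.HasExpansion b)
    {c d : B} (hc : c ∈ S.Bas b) (hd : d ∈ S.Bas b) (hcd : c ≠ d) :
    Disjoint (S.supp c) (S.supp d) :=
  S.proper_disjoint b _ (bas_mem S h).1 (bas_mem S h).2 c hc d hd hcd

lemma supp_kill (S : SimpleExpansionSet B X) {c a b : B}
    (h1 : S.supp c ⊆ S.supp a) (h2 : S.supp c ⊆ S.supp b)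
    (hd : Disjoint (S.supp a) (S.supp b)) : False := by
  obtain ⟨x, hx⟩ := S.supp_nonempty c
  exact Set.disjoint_left.mp hd (h1 hx) (h2 hx)

lemma notMem_bas (S : SimpleExpansionSet B X) {b : B} (h : S.HasExpansion b) :
    b ∉ S.Bas b := by
  intro hb
  obtain ⟨c, hc, hcb⟩ :=
    Finset.exists_mem_ne (lt_of_lt_of_le one_lt_two (bas_card S h)) b
  exact supp_kill S (subset_refl _) (bas_supp S h hc) (bas_disj S h hc hb hcb)

/-- Characterization of membership in a cube member, for elements whose support lies in
`supp bk` for some `bk ∈ v''`. -/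
lemma mem_cube_part (S : SimpleExpansionSet B X) [DecidableEq B]
    {v' v'' : Finset B} (hv' : S.IsVertex v') (hsub : v'' ⊆ v')
    (hexp : ∀ b ∈ v'', S.HasExpansion b)
    {w : Finset B} (hw : w ⊆ v'')
    {bk : B} (hbk : bk ∈ v'') {c : B} (hc : S.supp c ⊆ S.supp bk) :
    (c ∈ (v' \ v'') ∪ (v'' \ w) ∪ w.biUnion S.Bas) ↔
      ((c = bk ∧ bk ∉ w) ∨ (c ∈ S.Bas bk ∧ bk ∈ w)) := by
  constructor
  · intro h
    simp only [Finset.mem_union, Finset.mem_sdiff, Finset.mem_biUnion] at h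
    rcases h with (⟨hcv', hcnv''⟩ | ⟨hcv'', hcnw⟩) | ⟨b', hb'w, hcB⟩
    · exfalso
      have hne : c ≠ bk := fun he => hcnv'' (he ▸ hbk)
      exact supp_kill S (subset_refl _) hc (hv' c hcv' bk (hsub hbk) hne)
    · by_cases hcbk : c = bk
      · subst hcbk; exact Or.inl ⟨rfl, hcnw⟩
      · exact absurd (hv' c (hsub hcv'') bk (hsub hbk) hcbk)
          (fun hd => supp_kill S (subset_refl _) hc hd)
    · have hb'v'' : b' ∈ v'' := hw hb'w
      by_cases hb'bk : b' = bk
      · subst hb'bk; exact Or.inr ⟨hcB, hb'w⟩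
      · exfalso
        exact supp_kill S (bas_supp S (hexp b' hb'v'') hcB) hc
          (hv' b' (hsub hb'v'') bk (hsub hbk) hb'bk)
  · rintro (⟨rfl, hnw⟩ | ⟨hcB, hbw⟩)
    · exact Finset.mem_union_left _ (Finset.mem_union_right _
        (Finset.mem_sdiff.mpr ⟨hbk, hnw⟩))
    · exact Finset.mem_union_right _ (Finset.mem_biUnion.mpr ⟨bk, hbw, hcB⟩)

/-- Two cube members agreeing on membership of all elements of `v''` are equal. -/
lemma cube_ext (S : SimpleExpansionSet B X) [DecidableEq B]
    {v' v'' : Finset B} (hv' : S.IsVertex v') (hsub : v'' ⊆ v')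
    (hexp : ∀ b ∈ v'', S.HasExpansion b)
    {u₁ u₂ : Finset B} (h1 : u₁ ∈ S.cube v' v'') (h2 : u₂ ∈ S.cube v' v'')
    (h : ∀ b ∈ v'', (b ∈ u₁ ↔ b ∈ u₂)) : u₁ = u₂ := by
  obtain ⟨w1, hw1, he1⟩ := h1
  obtain ⟨w2, hw2, he2⟩ := h2
  have key : ∀ (w : Finset B), w ⊆ v'' → ∀ b ∈ v'',
      (b ∈ (v' \ v'') ∪ (v'' \ w) ∪ w.biUnion S.Bas ↔ b ∉ w) := by
    intro w hw b hb
    rw [mem_cube_part S hv' hsub hexp hw hb (subset_refl _)]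
    constructor
    · rintro (⟨-, hnw⟩ | ⟨hb', -⟩)
      · exact hnw
      · exact absurd hb' (notMem_bas S (hexp b hb))
    · intro hnw; exact Or.inl ⟨rfl, hnw⟩
  have hww : w1 = w2 := by
    ext x
    by_cases hxv : x ∈ v''
    · have e1 : x ∈ u₁ ↔ x ∉ w1 := by rw [he1]; exact key w1 hw1 x hxv
      have e2 : x ∈ u₂ ↔ x ∉ w2 := by rw [he2]; exact key w2 hw2 x hxv
      exact not_iff_not.mp (by rw [← e1, ← e2]; exact h x hxv)
    · exact iff_of_false (fun hx => hxv (hw1 hx)) (fun hx => hxv (hw2 hx))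
  subst hww
  rw [he1, he2]

/-- The key structural lemma: a cubical edge inside a cube `𝒞(v', v'')` goes in the
direction of a unique `b ∈ v''`; the basin's supports lie in `supp b`, the membership
of `b` flips, and the membership of every other element of `v''` is preserved. -/
lemma edge_direction (S : SimpleExpansionSet B X) [DecidableEq B]
    {v' v'' : Finset B} (hv' : S.IsVertex v') (hsub : v'' ⊆ v')
    (hexp : ∀ b ∈ v'', S.HasExpansion b)
    {v u Bsn : Finset B}
    (hmv : v ∈ S.cube v' v'') (hmu : u ∈ S.cube v' v'')
    (hB : S.BasinOf v u Bsn) :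
    ∃ b ∈ v'', (∀ c ∈ Bsn, S.supp c ⊆ S.supp b) ∧ (b ∈ u ↔ b ∉ v) ∧
      ∀ b' ∈ v'', b' ≠ b → (b' ∈ u ↔ b' ∈ v) := by
  obtain ⟨wv, hwv, hveq⟩ := hmv
  obtain ⟨wu, hwu, hueq⟩ := hmu
  rcases hB with ⟨b, hbv, hbe, hueq', rfl⟩ | ⟨b, hbu, hbe, hveq', rfl⟩
  · -- expansion edge: u = v.erase b ∪ Bas b, Bsn = {b}
    have hbnu : b ∉ u := by
      rw [hueq']
      simp only [Finset.mem_union, Finset.mem_erase, not_or, not_and]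
      exact ⟨fun h => absurd rfl h, notMem_bas S hbe⟩
    have hbv0 := hbv
    rw [hveq] at hbv
    simp only [Finset.mem_union, Finset.mem_sdiff, Finset.mem_biUnion] at hbv
    rcases hbv with (⟨hbv', hbnv''⟩ | ⟨hbv'', hbnw⟩) | ⟨bk, hbkw, hbBas⟩
    · -- b ∈ v' \ v'' : impossible since then b ∈ u
      exfalso
      apply hbnu
      rw [hueq]
      exact Finset.mem_union_left _ (Finset.mem_union_left _
        (Finset.mem_sdiff.mpr ⟨hbv', hbnv''⟩))
    · -- main case: b ∈ v''
      refine ⟨b, hbv'', ?_, iff_of_false hbnu (by simpa using hbv0), ?_⟩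
      · intro c hc
        rw [Finset.mem_singleton] at hc
        subst hc; exact subset_refl _
      · intro b' hb'v'' hb'b
        have hnB : b' ∉ S.Bas b := fun hmem =>
          supp_kill S (bas_supp S hbe hmem) (subset_refl _)
            (hv' b (hsub hbv'') b' (hsub hb'v'') (Ne.symm hb'b))
        rw [hueq']
        simp only [Finset.mem_union, Finset.mem_erase, hnB, or_false]
        exact ⟨fun h => h.2, fun h => ⟨hb'b, h⟩⟩
    · -- b ∈ Bas bk for bk ∈ wv : impossible
      exfalso
      have hbkv'' : bk ∈ v'' := hwv hbkw
      have hek : S.HasExpansion bk := hexp bk hbkv''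
      obtain ⟨c, hcB, hcb⟩ :=
        Finset.exists_mem_ne (lt_of_lt_of_le one_lt_two (bas_card S hek)) b
      have hcv : c ∈ v := by
        rw [hveq]
        exact Finset.mem_union_right _ (Finset.mem_biUnion.mpr ⟨bk, hbkw, hcB⟩)
      have hcu : c ∈ u := by
        rw [hueq']
        exact Finset.mem_union_left _ (Finset.mem_erase.mpr ⟨hcb, hcv⟩)
      have hcu' : c ∈ (v' \ v'') ∪ (v'' \ wu) ∪ wu.biUnion S.Bas := by
        rw [← hueq]; exact hcu
      rcases (mem_cube_part S hv' hsub hexp hwu hbkv'' (bas_supp S hek hcB)).mp hcu' with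
        ⟨hcbk, -⟩ | ⟨-, hbkwu⟩
      · exact notMem_bas S hek (hcbk ▸ hcB)
      · apply hbnu
        rw [hueq]
        exact Finset.mem_union_right _ (Finset.mem_biUnion.mpr ⟨bk, hbkwu, hbBas⟩)
  · -- contraction edge: v = u.erase b ∪ Bas b, Bsn = Bas b
    have hbnv : b ∉ v := by
      rw [hveq']
      simp only [Finset.mem_union, Finset.mem_erase, not_or, not_and]
      exact ⟨fun h => absurd rfl h, notMem_bas S hbe⟩
    have hbu0 := hbu
    rw [hueq] at hbu
    simp only [Finset.mem_union, Finset.mem_sdiff, Finset.mem_biUnion] at hbu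
    rcases hbu with (⟨hbv', hbnv''⟩ | ⟨hbv'', hbnw⟩) | ⟨bk, hbkw, hbBas⟩
    · -- b ∈ v' \ v'' : impossible since then b ∈ v
      exfalso
      apply hbnv
      rw [hveq]
      exact Finset.mem_union_left _ (Finset.mem_union_left _
        (Finset.mem_sdiff.mpr ⟨hbv', hbnv''⟩))
    · -- main case: b ∈ v''
      refine ⟨b, hbv'', fun c hc => bas_supp S hbe hc, iff_of_true hbu0 hbnv, ?_⟩
      intro b' hb'v'' hb'b
      have hnB : b' ∉ S.Bas b := fun hmem =>
        supp_kill S (bas_supp S hbe hmem) (subset_refl _)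
          (hv' b (hsub hbv'') b' (hsub hb'v'') (Ne.symm hb'b))
      rw [hveq']
      simp only [Finset.mem_union, Finset.mem_erase, hnB, or_false]
      exact ⟨fun h => ⟨hb'b, h⟩, fun h => h.2⟩
    · -- b ∈ Bas bk for bk ∈ wu : impossible
      exfalso
      have hbkv'' : bk ∈ v'' := hwu hbkw
      have hek : S.HasExpansion bk := hexp bk hbkv''
      obtain ⟨c, hcB, hcbk⟩ :=
        Finset.exists_mem_ne (lt_of_lt_of_le one_lt_two (bas_card S hbe)) bk
      have hcv : c ∈ v := by
        rw [hveq']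
        exact Finset.mem_union_right _ hcB
      have hcv2 : c ∈ (v' \ v'') ∪ (v'' \ wv) ∪ wv.biUnion S.Bas := by
        rw [← hveq]; exact hcv
      have hcsupp : S.supp c ⊆ S.supp bk :=
        (bas_supp S hbe hcB).trans (bas_supp S hek hbBas)
      rcases (mem_cube_part S hv' hsub hexp hwv hbkv'' hcsupp).mp hcv2 with
        ⟨hceq, -⟩ | ⟨-, hbkwv⟩
      · exact hcbk hceq
      · apply hbnv
        rw [hveq]
        exact Finset.mem_union_right _ (Finset.mem_biUnion.mpr ⟨bk, hbkwv, hbBas⟩)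

end Aux

end SimpleExpansionSet

open SimpleExpansionSet SimpleExpansionSet.Aux

/-- Disjoint basins: if `v, v_i, v_j` lie in a common 2-dimensional cube,
the basins of `v_i` and `v_j` relative to `v` are disjoint. -/
theorem basins_disjoint {B X : Type*} [DecidableEq B] (S : SimpleExpansionSet B X)
    (v vi vj Bi Bj : Finset B)
    (hv : S.IsVertex v) (hvfull : S.vsupp v = Set.univ)
    (hvi : S.IsVertex vi) (hvifull : S.vsupp vi = Set.univ)
    (hvj : S.IsVertex vj) (hvjfull : S.vsupp vj = Set.univ)
    (hne : vi ≠ vj)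
    (hBi : S.BasinOf v vi Bi) (hBj : S.BasinOf v vj Bj)
    (v' v'' : Finset B) (hv' : S.IsVertex v') (hsub : v'' ⊆ v')
    (hexp : ∀ b ∈ v'', S.HasExpansion b) (hc2 : v''.card = 2)
    (hmv : v ∈ S.cube v' v'') (hmi : vi ∈ S.cube v' v'') (hmj : vj ∈ S.cube v' v'') :
    Bi ∩ Bj = ∅ := by
  obtain ⟨bi, hbi_mem, hBi_supp, hBi_flip, hBi_other⟩ :=
    edge_direction S hv' hsub hexp hmv hmi hBi
  obtain ⟨bj, hbj_mem, hBj_supp, hBj_flip, hBj_other⟩ :=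
    edge_direction S hv' hsub hexp hmv hmj hBj
  by_cases hbb : bi = bj
  · subst hbb
    exfalso
    apply hne
    apply cube_ext S hv' hsub hexp hmi hmj
    intro b hb
    by_cases hb' : b = bi
    · subst hb'
      exact hBi_flip.trans hBj_flip.symm
    · exact (hBi_other b hb hb').trans (hBj_other b hb hb').symm
  · have hd : Disjoint (S.supp bi) (S.supp bj) :=
      hv' bi (hsub hbi_mem) bj (hsub hbj_mem) hbb
    rw [Finset.eq_empty_iff_forall_notMem]
    intro c hc
    rw [Finset.mem_inter] at hc
    exact supp_kill S (hBi_supp c hc.1) (hBj_supp c hc.2) hd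
end

section
/- (Upward local finiteness) Let 𝓑 be a simple expansion set over X and let v be a full-support vertex of Δ^f_𝓑. Then every full-support vertex u with |u| > |v| that spans a 1-simplex of Δ^f_𝓑 together with v is of the form u = ⋃_{b ∈ v} B_b with B_b ∈ ℰ(b) for each b ∈ v; consequently there are at most 2^{|v|} − 1 such vertices u. -/
open SimpleExpansionSet

lemma mem_restrict_aux {B X : Type*} (S : SimpleExpansionSet B X) (b b' : B) (u : Finset B) :
    b' ∈ S.restrict b u ↔ b' ∈ u ∧ S.supp b' ⊆ S.supp b := by
  classical
  simp [SimpleExpansionSet.restrict, Finset.mem_filter]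

/-- Key decomposition: a taller full-support neighbour is the union of its restrictions. -/
lemma biUnion_restrict_aux {B X : Type*} [DecidableEq B] (S : SimpleExpansionSet B X)
    (v : Finset B) (hfull : S.vsupp v = Set.univ) (u : Finset B) (hu : S.IsVertex u)
    (hr : ∀ b ∈ v, S.restrict b u ∈ S.E b) :
    u = v.biUnion (fun b => S.restrict b u) := by
  ext b'
  simp only [Finset.mem_biUnion]
  constructor
  · intro hb'
    obtain ⟨x, hx⟩ := S.supp_nonempty b'
    have hxv : x ∈ S.vsupp v := by rw [hfull]; trivial
    simp only [SimpleExpansionSet.vsupp, Set.mem_iUnion] at hxv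
    obtain ⟨b, hbv, hxb⟩ := hxv
    refine ⟨b, hbv, ?_⟩
    by_cases hcase : S.restrict b u = {b}
    · have hbu : b ∈ u := by
        have : b ∈ S.restrict b u := by rw [hcase]; exact Finset.mem_singleton_self b
        exact ((mem_restrict_aux S b b u).mp this).1
      have hbb' : b' = b := by
        by_contra hne
        exact Set.disjoint_left.mp (hu b' hb' b hbu hne) hx hxb
      rw [mem_restrict_aux]
      exact ⟨hb', hbb' ▸ Set.Subset.refl _⟩
    · have hsupp := S.proper_supp b (S.restrict b u) (hr b hbv) hcase
      have hxmem : x ∈ ⋃ c ∈ S.restrict b u, S.supp c := hsupp ▸ hxb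
      simp only [Set.mem_iUnion] at hxmem
      obtain ⟨c, hc, hxc⟩ := hxmem
      have hcu : c ∈ u := ((mem_restrict_aux S b c u).mp hc).1
      have : c = b' := by
        by_contra hne
        exact Set.disjoint_left.mp (hu c hcu b' hb' hne) hxc hx
      exact this ▸ hc
  · rintro ⟨b, hbv, hb⟩
    exact ((mem_restrict_aux S b b' u).mp hb).1

/-- Upward local finiteness: every taller neighbour of `v` is a union
`⋃_{b ∈ v} B_b` with `B_b ∈ ℰ(b)`, and there are at most `2^{|v|} − 1` of them. -/
theorem upward_locally_finite {B X : Type*} [DecidableEq B] (S : SimpleExpansionSet B X)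
    (v : Finset B) (hv : S.IsVertex v) (hfull : S.vsupp v = Set.univ) :
    (∀ u : Finset B, S.IsVertex u → S.vsupp u = Set.univ → v.card < u.card →
      (∀ b ∈ v, S.restrict b u ∈ S.E b) →
      ∃ Bf : B → Finset B, (∀ b ∈ v, Bf b ∈ S.E b) ∧ u = v.biUnion Bf) ∧
    {u : Finset B | S.IsVertex u ∧ S.vsupp u = Set.univ ∧ v.card < u.card ∧
      ∀ b ∈ v, S.restrict b u ∈ S.E b}.Finite ∧
    {u : Finset B | S.IsVertex u ∧ S.vsupp u = Set.univ ∧ v.card < u.card ∧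
      ∀ b ∈ v, S.restrict b u ∈ S.E b}.ncard ≤ 2 ^ v.card - 1 := by
  classical
  set T : Set (Finset B) := {u : Finset B | S.IsVertex u ∧ S.vsupp u = Set.univ ∧
      v.card < u.card ∧ ∀ b ∈ v, S.restrict b u ∈ S.E b} with hT
  set f : Finset B → Finset B := fun u => v.filter (fun b => S.restrict b u ≠ {b}) with hf
  -- f maps T into powerset v minus ∅
  have hmaps : ∀ u ∈ T, f u ∈ v.powerset.erase (∅ : Finset B) := by
    rintro u ⟨hu, hufull, hcard, hr⟩
    rw [Finset.mem_erase]
    constructor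
    · intro hempty
      have hall : ∀ b ∈ v, S.restrict b u = {b} := by
        intro b hb
        by_contra hne
        have : b ∈ f u := Finset.mem_filter.mpr ⟨hb, hne⟩
        simp [hempty] at this
      have huv : u = v := by
        rw [biUnion_restrict_aux S v hfull u hu hr]
        rw [Finset.biUnion_congr rfl hall]
        simp
      rw [huv] at hcard
      exact lt_irrefl _ hcard
    · exact Finset.mem_powerset.mpr (Finset.filter_subset _ _)
  have hinj : Set.InjOn f T := by
    rintro u₁ ⟨hu₁, _, _, hr₁⟩ u₂ ⟨hu₂, _, _, hr₂⟩ heq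
    have hres : ∀ b ∈ v, S.restrict b u₁ = S.restrict b u₂ := by
      intro b hb
      by_cases h1 : S.restrict b u₁ = {b}
      · have : b ∉ f u₁ := by simp [hf, Finset.mem_filter, h1]
        rw [heq] at this
        have h2 : S.restrict b u₂ = {b} := by
          by_contra h2
          exact this (Finset.mem_filter.mpr ⟨hb, h2⟩)
        rw [h1, h2]
      · have : b ∈ f u₁ := Finset.mem_filter.mpr ⟨hb, h1⟩
        rw [heq] at this
        have h2 : S.restrict b u₂ ≠ {b} := (Finset.mem_filter.mp this).2
        exact S.proper_unique b _ (hr₁ b hb) _ (hr₂ b hb) h1 h2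
    rw [biUnion_restrict_aux S v hfull u₁ hu₁ hr₁,
        biUnion_restrict_aux S v hfull u₂ hu₂ hr₂]
    exact Finset.biUnion_congr rfl hres
  have himg : f '' T ⊆ ↑(v.powerset.erase (∅ : Finset B)) := by
    rintro _ ⟨u, hu, rfl⟩
    exact hmaps u hu
  have himgfin : (f '' T).Finite := Set.Finite.subset (Finset.finite_toSet _) himg
  have hTfin : T.Finite := Set.Finite.of_finite_image himgfin hinj
  refine ⟨?_, hTfin, ?_⟩
  · intro u hu hufull hcard hr
    exact ⟨fun b => S.restrict b u, hr, biUnion_restrict_aux S v hfull u hu hr⟩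
  · calc T.ncard = (f '' T).ncard := (Set.ncard_image_of_injOn hinj).symm
      _ ≤ (↑(v.powerset.erase (∅ : Finset B)) : Set (Finset B)).ncard :=
          Set.ncard_le_ncard himg (Finset.finite_toSet _)
      _ = (v.powerset.erase (∅ : Finset B)).card := Set.ncard_coe_finset _
      _ = 2 ^ v.card - 1 := by
          rw [Finset.card_erase_of_mem (Finset.empty_mem_powerset v), Finset.card_powerset]
end

section
/- (Directedness for Thompson's group V) In the V expansion set 𝓑_V, the full-support vertices form a directed set with respect to ⪯: for any full-support vertices v₁ and v₂ there exists a full-support vertex v'' with v₁ ⪯ v'' and v₂ ⪯ v''. -/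
/-- The Cantor set `X = ∏_{i=1}^∞ {0,1}`. -/
abbrev Cantor := ℕ → Bool

/-- The cylinder (ball) `B_ω`: all infinite binary sequences with prefix `ω`. -/
def cyl (ω : List Bool) : Set Cantor := {x | ∀ i : Fin ω.length, x i.1 = ω.get i}

/-- The prefix replacement `σ_{α}^{β} : B_α → B_β` (as a total function). -/
def sigmaMap (α β : List Bool) : Cantor → Cantor :=
  fun x i => if h : i < β.length then β.get ⟨i, h⟩ else x (i - β.length + α.length)

/-- `f` is a disjoint union of finitely many members of `S_V` whose domains
partition `B_ω` (and whose codomains are pairwise disjoint, so `f` is injective). -/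
def IsVMap (ω : List Bool) (f : Cantor → Cantor) : Prop :=
  ∃ (n : ℕ) (d c : Fin n → List Bool),
    (⋃ i, cyl (d i)) = cyl ω ∧
    (∀ i j, i ≠ j → Disjoint (cyl (d i)) (cyl (d j))) ∧
    (∀ i j, i ≠ j → Disjoint (cyl (c i)) (cyl (c j))) ∧
    (∀ i, ∀ x ∈ cyl (d i), f x = sigmaMap (d i) (c i) x)

/-- A V-pair `(f, B_ω)`. -/
structure VPair where
  word : List Bool
  f : Cantor → Cantor
  isV : IsVMap word f

/-- `(f₁, B_{ω₁}) ∼ (f₂, B_{ω₂})`: there is `σ ∈ S_V` carrying `B_{ω₁}` bijectively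
onto `B_{ω₂}` with `f₂ ∘ σ = f₁`; such a `σ` is necessarily `σ_{ω₁}^{ω₂}`. -/
def VEquiv (p q : VPair) : Prop :=
  ∀ x ∈ cyl p.word, q.f (sigmaMap p.word q.word x) = p.f x

/-- The V expansion set `𝓑_V`: equivalence classes `[f, B_ω]` of V-pairs. -/
def BV := Quot VEquiv

noncomputable instance : DecidableEq BV := Classical.decEq BV

/-- `supp([f, B_ω]) = f(B_ω)` (computed from a chosen representative). -/
noncomputable def suppV (b : BV) : Set Cantor :=
  (Quot.out b).f '' cyl (Quot.out b).word

/-- `u = Bas(b)`: `u` is the contraction basin `{[f|_{B_{ω0}}, B_{ω0}], [f|_{B_{ω1}}, B_{ω1}]}`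
of `b = [f, B_ω]`. -/
def IsBasV (b : BV) (u : Finset BV) : Prop :=
  ∃ p pl pr : VPair, Quot.mk VEquiv p = b ∧
    pl.word = p.word ++ [false] ∧ pl.f = p.f ∧
    pr.word = p.word ++ [true] ∧ pr.f = p.f ∧
    u = {Quot.mk VEquiv pl, Quot.mk VEquiv pr}

/-- A vertex of `𝓑_V`. -/
def VIsVertex (v : Finset BV) : Prop :=
  ∀ b₁ ∈ v, ∀ b₂ ∈ v, b₁ ≠ b₂ → Disjoint (suppV b₁) (suppV b₂)

def vsuppV (v : Finset BV) : Set Cantor := ⋃ b ∈ v, suppV b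

/-- One expansion step: replace `b ∈ v` by its contraction basin. -/
def stepV (v v' : Finset BV) : Prop :=
  ∃ b ∈ v, ∃ u : Finset BV, IsBasV b u ∧ v' = v.erase b ∪ u

/-- The ascending-path relation `⪯` on vertices of `𝓑_V`. -/
def precV : Finset BV → Finset BV → Prop := Relation.ReflTransGen stepV


lemma mem_cyl {x : Cantor} {ω : List Bool} :
    x ∈ cyl ω ↔ ∀ i (h : i < ω.length), x i = ω[i] := by
  constructor
  · intro hx i h; exact hx ⟨i, h⟩
  · intro hx i; exact hx i.1 i.2

/-- canonical extension of a finite word -/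
def extW (ω : List Bool) : Cantor := fun i => if h : i < ω.length then ω[i] else false

lemma extW_mem (ω : List Bool) : extW ω ∈ cyl ω := by
  rw [mem_cyl]; intro i h; simp [extW, h]

lemma cyl_nonempty (ω : List Bool) : (cyl ω).Nonempty := ⟨extW ω, extW_mem ω⟩

lemma mem_cyl_append {x : Cantor} {α β : List Bool} :
    x ∈ cyl (α ++ β) ↔ x ∈ cyl α ∧ ∀ j (h : j < β.length), x (α.length + j) = β[j] := by
  simp only [mem_cyl]
  constructor
  · intro h
    refine ⟨fun i hi => ?_, fun j hj => ?_⟩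
    · have := h i (by simp; omega)
      rwa [List.getElem_append_left hi] at this
    · have := h (α.length + j) (by simp; omega)
      rw [List.getElem_append_right (by omega)] at this
      simpa using this
  · rintro ⟨h1, h2⟩ i hi
    rcases lt_or_ge i α.length with h | h
    · rw [List.getElem_append_left h]; exact h1 i h
    · have hilen : i - α.length < β.length := by simp at hi; omega
      rw [List.getElem_append_right h]
      have := h2 (i - α.length) hilen
      rwa [Nat.add_sub_cancel' h] at this

lemma cyl_append_subset (α β : List Bool) : cyl (α ++ β) ⊆ cyl α :=
  fun _ h => (mem_cyl_append.1 h).1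

lemma cyl_subset_of_prefix {α β : List Bool} (h : α <+: β) : cyl β ⊆ cyl α := by
  obtain ⟨t, rfl⟩ := h; exact cyl_append_subset α t

lemma prefix_comparable {x : Cantor} {α β : List Bool}
    (ha : x ∈ cyl α) (hb : x ∈ cyl β) : α <+: β ∨ β <+: α := by
  rw [mem_cyl] at ha hb
  rcases le_total α.length β.length with h | h
  · left
    have : α = β.take α.length := by
      apply List.ext_getElem (by simp [h])
      intro i h1 h2
      rw [List.getElem_take]
      rw [← ha i h1, ← hb i (by omega)]
    exact this ▸ List.take_prefix _ _
  · right
    have : β = α.take β.length := by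
      apply List.ext_getElem (by simp [h])
      intro i h1 h2
      rw [List.getElem_take]
      rw [← hb i h1, ← ha i (by omega)]
    exact this ▸ List.take_prefix _ _

lemma not_disjoint_cyl_of_prefix {α β : List Bool} (h : α <+: β) :
    ¬ Disjoint (cyl α) (cyl β) := by
  intro hd
  have := cyl_subset_of_prefix h
  rcases cyl_nonempty β with ⟨x, hx⟩
  exact Set.disjoint_left.1 hd (this hx) hx

lemma disjoint_cyl {α β : List Bool} (h : ¬ α <+: β) (h' : ¬ β <+: α) :
    Disjoint (cyl α) (cyl β) := by
  rw [Set.disjoint_left]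
  intro x hx hx'
  rcases prefix_comparable hx hx' with hc | hc <;> [exact h hc; exact h' hc]

lemma disjoint_cyl_of_ne {α β : List Bool} (h : α.length = β.length) (hne : α ≠ β) :
    Disjoint (cyl α) (cyl β) := by
  apply disjoint_cyl
  · intro hc; exact hne (hc.eq_of_length h)
  · intro hc; exact hne (hc.eq_of_length h.symm).symm

lemma cyl_strict {α : List Bool} {t : List Bool} (ht : t ≠ []) :
    ¬ cyl α ⊆ cyl (α ++ t) := by
  intro hsub
  have hx : extW (α ++ [!t.head ht]) ∈ cyl α :=
    cyl_append_subset _ _ (extW_mem _)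
  have hx2 := hsub hx
  have h1 : extW (α ++ [!t.head ht]) α.length = !t.head ht := by
    have := mem_cyl_append.1 (extW_mem (α ++ [!t.head ht]))
    simpa using this.2 0 (by simp)
  have h2 : extW (α ++ [!t.head ht]) α.length = t.head ht := by
    have := mem_cyl_append.1 hx2
    have := this.2 0 (by simp [List.length_pos_iff_ne_nil, ht])
    simpa [List.getElem_zero, List.head?_eq_head ht] using this
  rw [h1] at h2
  simp at h2

lemma cyl_injective {α β : List Bool} (h : cyl α = cyl β) : α = β := by
  have h1 : α <+: β ∨ β <+: α := by
    rcases cyl_nonempty β with ⟨x, hx⟩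
    exact prefix_comparable (h ▸ hx) hx
  rcases h1 with hc | hc
  · obtain ⟨t, rfl⟩ := hc
    rcases eq_or_ne t [] with rfl | ht
    · simp
    · exact absurd (h.le : cyl α ⊆ cyl (α ++ t)) (cyl_strict ht)
  · obtain ⟨t, rfl⟩ := hc
    rcases eq_or_ne t [] with rfl | ht
    · simp
    · exact absurd (h.ge : cyl β ⊆ cyl (β ++ t)) (cyl_strict ht)

lemma sigmaMap_mem (α β : List Bool) (x : Cantor) : sigmaMap α β x ∈ cyl β := by
  rw [mem_cyl]; intro i h; simp [sigmaMap, h]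

lemma sigmaMap_sigmaMap (α β γ : List Bool) (x : Cantor) :
    sigmaMap β γ (sigmaMap α β x) = sigmaMap α γ x := by
  funext i
  simp only [sigmaMap]
  rcases lt_or_ge i γ.length with h | h
  · simp [h]
  · have h1 : ¬ i < γ.length := by omega
    have h2 : ¬ i - γ.length + β.length < β.length := by omega
    simp only [dif_neg h1, dif_neg h2]
    congr 1
    omega

lemma sigmaMap_self {α : List Bool} {x : Cantor} (hx : x ∈ cyl α) :
    sigmaMap α α x = x := by
  funext i
  rw [mem_cyl] at hx
  simp only [sigmaMap]
  rcases lt_or_ge i α.length with h | h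
  · simp [h, hx i h]
  · have h1 : ¬ i < α.length := by omega
    simp only [dif_neg h1]
    congr 1
    omega

lemma sigmaMap_inv {α β : List Bool} {x : Cantor} (hx : x ∈ cyl α) :
    sigmaMap β α (sigmaMap α β x) = x := by
  rw [sigmaMap_sigmaMap, sigmaMap_self hx]

/-- key compatibility: on `cyl (α ++ s)`, `σ_α^β` agrees with `σ_{α++s}^{β++s}`. -/
lemma sigmaMap_append {α β s : List Bool} {x : Cantor} (hx : x ∈ cyl (α ++ s)) :
    sigmaMap (α ++ s) (β ++ s) x = sigmaMap α β x := by
  funext i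
  rw [mem_cyl] at hx
  simp only [sigmaMap, List.length_append, List.get_eq_getElem]
  rcases lt_or_ge i β.length with h | h
  · simp only [dif_pos (by omega : i < β.length + s.length), dif_pos h]
    rw [List.getElem_append_left h]
  · rcases lt_or_ge i (β.length + s.length) with h2 | h2
    · simp only [dif_pos h2, dif_neg (by omega : ¬ i < β.length)]
      rw [List.getElem_append_right h]
      have hidx : i - β.length + α.length < (α ++ s).length := by simp; omega
      have := hx (i - β.length + α.length) hidx
      rw [this, List.getElem_append_right (by omega)]
      congr 1
      omega
    · simp only [dif_neg (by omega : ¬ i < β.length + s.length),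
        dif_neg (by omega : ¬ i < β.length)]
      congr 1
      omega

lemma sigmaMap_image (α β : List Bool) : sigmaMap α β '' cyl α = cyl β := by
  apply Set.Subset.antisymm
  · rintro y ⟨x, _, rfl⟩; exact sigmaMap_mem α β x
  · intro y hy
    exact ⟨sigmaMap β α y, sigmaMap_mem β α y, sigmaMap_inv hy⟩



----------------- batch 3 -----------------

lemma vequiv_refl (p : VPair) : VEquiv p p := fun x hx => by rw [sigmaMap_self hx]

lemma vequiv_symm {p q : VPair} (h : VEquiv p q) : VEquiv q p := by
  intro y hy
  have hx : sigmaMap q.word p.word y ∈ cyl p.word := sigmaMap_mem _ _ _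
  have := h (sigmaMap q.word p.word y) hx
  rw [sigmaMap_sigmaMap, sigmaMap_self hy] at this
  exact this.symm

lemma vequiv_trans {p q r : VPair} (h1 : VEquiv p q) (h2 : VEquiv q r) : VEquiv p r := by
  intro x hx
  have hq : sigmaMap p.word q.word x ∈ cyl q.word := sigmaMap_mem _ _ _
  have := h2 (sigmaMap p.word q.word x) hq
  rw [sigmaMap_sigmaMap] at this
  rw [this, h1 x hx]

lemma vequiv_equivalence : Equivalence VEquiv :=
  ⟨vequiv_refl, vequiv_symm, vequiv_trans⟩

lemma mk_eq_iff {p q : VPair} : Quot.mk VEquiv p = Quot.mk VEquiv q ↔ VEquiv p q := by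
  constructor
  · intro h
    have := Quot.eqvGen_exact h
    rwa [Equivalence.eqvGen_iff vequiv_equivalence] at this
  · exact Quot.sound

lemma suppV_mk (p : VPair) : suppV (Quot.mk VEquiv p) = p.f '' cyl p.word := by
  have h : Quot.mk VEquiv (Quot.out (Quot.mk VEquiv p)) = Quot.mk VEquiv p := Quot.out_eq _
  have he : VEquiv (Quot.out (Quot.mk VEquiv p)) p := mk_eq_iff.1 h
  set q := Quot.out (Quot.mk VEquiv p) with hq
  show q.f '' cyl q.word = p.f '' cyl p.word
  apply Set.Subset.antisymm
  · rintro y ⟨x, hx, rfl⟩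
    exact ⟨sigmaMap q.word p.word x, sigmaMap_mem _ _ _, he x hx⟩
  · rintro y ⟨x, hx, rfl⟩
    refine ⟨sigmaMap p.word q.word x, sigmaMap_mem _ _ _, ?_⟩
    have := he (sigmaMap p.word q.word x) (sigmaMap_mem _ _ _)
    rw [sigmaMap_sigmaMap, sigmaMap_self hx] at this
    exact this.symm

lemma suppV_nonempty (b : BV) : (suppV b).Nonempty :=
  ((cyl_nonempty _).image _)


----------------- batch 4 -----------------

lemma isVMap_of_index {ι : Type} [Fintype ι] {ω : List Bool} {f : Cantor → Cantor}
    (d c : ι → List Bool)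
    (hU : (⋃ i, cyl (d i)) = cyl ω)
    (hd : ∀ i j, i ≠ j → Disjoint (cyl (d i)) (cyl (d j)))
    (hc : ∀ i j, i ≠ j → Disjoint (cyl (c i)) (cyl (c j)))
    (hf : ∀ i, ∀ x ∈ cyl (d i), f x = sigmaMap (d i) (c i) x) :
    IsVMap ω f := by
  classical
  let e := (Fintype.equivFin ι).symm
  refine ⟨Fintype.card ι, d ∘ e, c ∘ e, ?_, ?_, ?_, ?_⟩
  · rw [← hU]; exact e.surjective.iUnion_comp (fun i => cyl (d i))
  · intro i j hij; exact hd _ _ (fun h => hij (e.injective h))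
  · intro i j hij; exact hc _ _ (fun h => hij (e.injective h))
  · intro i x hx; exact hf (e i) x hx

lemma isVMap_sigmaMap (d c : List Bool) : IsVMap d (sigmaMap d c) := by
  refine ⟨1, fun _ => d, fun _ => c, Set.iUnion_const _, ?_, ?_, fun _ x _ => rfl⟩ <;>
    exact fun i j hij => absurd (Subsingleton.elim i j) hij

def elemPair (d c : List Bool) : VPair := ⟨d, sigmaMap d c, isVMap_sigmaMap d c⟩

def Ecl (c : List Bool) : BV := Quot.mk VEquiv (elemPair c c)

lemma mk_elemPair (d c : List Bool) : Quot.mk VEquiv (elemPair d c) = Ecl c := by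
  apply mk_eq_iff.2
  intro x hx
  show sigmaMap c c (sigmaMap d c x) = sigmaMap d c x
  rw [sigmaMap_sigmaMap]

lemma suppV_Ecl (c : List Bool) : suppV (Ecl c) = cyl c := by
  rw [Ecl, suppV_mk]
  exact sigmaMap_image c c

lemma Ecl_inj {c c' : List Bool} (h : Ecl c = Ecl c') : c = c' := by
  apply cyl_injective
  rw [← suppV_Ecl c, ← suppV_Ecl c', h]

lemma isVMap_snoc {ω : List Bool} {f : Cantor → Cantor} (h : IsVMap ω f) (a : Bool) :
    IsVMap (ω ++ [a]) f := by
  classical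
  obtain ⟨n, d, c, hU, hd, hc, hf⟩ := h
  set κ := ω ++ [a] with hκ
  let ι := {i : Fin n // κ <+: d i ∨ d i <+: κ}
  let d' : ι → List Bool := fun i => if κ <+: d i.1 then d i.1 else κ
  let c' : ι → List Bool := fun i =>
    if κ <+: d i.1 then c i.1 else c i.1 ++ κ.drop (d i.1).length
  have hd'sub : ∀ i : ι, cyl (d' i) ⊆ cyl (d i.1) := by
    intro i
    by_cases hp : κ <+: d i.1
    · simp only [d', if_pos hp]; exact subset_rfl
    · simp only [d', if_neg hp]
      exact cyl_subset_of_prefix (i.2.resolve_left hp)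
  have hc'sub : ∀ i : ι, cyl (c' i) ⊆ cyl (c i.1) := by
    intro i
    by_cases hp : κ <+: d i.1
    · simp only [c', if_pos hp]; exact subset_rfl
    · simp only [c', if_neg hp]
      exact cyl_append_subset _ _
  apply isVMap_of_index d' c'
  · apply Set.Subset.antisymm
    · apply Set.iUnion_subset
      intro i
      by_cases hp : κ <+: d i.1
      · simp only [d', if_pos hp]
        exact cyl_subset_of_prefix hp
      · simp only [d', if_neg hp]; exact subset_rfl
    · intro x hx
      have hxω : x ∈ cyl ω := cyl_append_subset ω [a] hx
      rw [← hU] at hxω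
      obtain ⟨_, ⟨i, rfl⟩, hxi⟩ := hxω
      have hcomp : κ <+: d i ∨ d i <+: κ := prefix_comparable hx hxi
      refine Set.mem_iUnion.2 ⟨⟨i, hcomp⟩, ?_⟩
      by_cases hp : κ <+: d i
      · simpa only [d', if_pos hp] using hxi
      · simpa only [d', if_neg hp] using hx
  · intro i j hij
    have : i.1 ≠ j.1 := fun h => hij (Subtype.ext h)
    exact (hd i.1 j.1 this).mono (hd'sub i) (hd'sub j)
  · intro i j hij
    have : i.1 ≠ j.1 := fun h => hij (Subtype.ext h)
    exact (hc i.1 j.1 this).mono (hc'sub i) (hc'sub j)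
  · intro i x hx
    by_cases hp : κ <+: d i.1
    · simp only [d', if_pos hp] at hx ⊢
      simp only [c', if_pos hp]
      exact hf i.1 x hx
    · simp only [d', if_neg hp] at hx ⊢
      simp only [c', if_neg hp]
      have hpre : d i.1 <+: κ := i.2.resolve_left hp
      have hsplit : d i.1 ++ κ.drop (d i.1).length = κ := by
        conv_rhs => rw [← List.take_append_drop (d i.1).length κ]
        rw [← List.prefix_iff_eq_take.1 hpre]
      have hxd : x ∈ cyl (d i.1) := cyl_subset_of_prefix hpre hx
      rw [hf i.1 x hxd]
      have hx' : x ∈ cyl (d i.1 ++ κ.drop (d i.1).length) := by rwa [hsplit]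
      rw [← sigmaMap_append (β := c i.1) hx', hsplit]

lemma isVMap_append {ω : List Bool} {f : Cantor → Cantor} (h : IsVMap ω f) (s : List Bool) :
    IsVMap (ω ++ s) f := by
  induction s generalizing ω with
  | nil => simpa using h
  | cons a t ih =>
    have h' := isVMap_snoc h a
    have := ih h'
    rwa [List.append_assoc, List.singleton_append] at this

def pairExt (p : VPair) (s : List Bool) : VPair := ⟨p.word ++ s, p.f, isVMap_append p.isV s⟩

lemma vpair_eq {p q : VPair} (h1 : p.word = q.word) (h2 : p.f = q.f) : p = q := by
  cases p; cases q; cases h1; cases h2; rfl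

lemma pairExt_nil (p : VPair) : pairExt p [] = p :=
  vpair_eq (by simp [pairExt]) rfl

lemma pairExt_pairExt (p : VPair) (s t : List Bool) :
    pairExt (pairExt p s) t = pairExt p (s ++ t) :=
  vpair_eq (by simp [pairExt]) rfl

lemma mk_pairExt_congr {p q : VPair} (h : VEquiv p q) (s : List Bool) :
    Quot.mk VEquiv (pairExt p s) = Quot.mk VEquiv (pairExt q s) := by
  apply mk_eq_iff.2
  intro x hx
  show q.f (sigmaMap (p.word ++ s) (q.word ++ s) x) = p.f x
  rw [sigmaMap_append hx]
  exact h x (cyl_append_subset _ _ hx)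

lemma suppV_pairExt (p : VPair) (s : List Bool) :
    suppV (Quot.mk VEquiv (pairExt p s)) = p.f '' cyl (p.word ++ s) := suppV_mk _

lemma isVMap_injOn {ω : List Bool} {f : Cantor → Cantor} (h : IsVMap ω f) :
    Set.InjOn f (cyl ω) := by
  obtain ⟨n, d, c, hU, hd, hc, hf⟩ := h
  intro x hx y hy hxy
  rw [← hU] at hx hy
  obtain ⟨_, ⟨i, rfl⟩, hxi⟩ := hx
  obtain ⟨_, ⟨j, rfl⟩, hyj⟩ := hy
  rcases eq_or_ne i j with rfl | hij
  · have h1 := hf i x hxi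
    have h2 := hf i y hyj
    rw [h1, h2] at hxy
    have := congrArg (sigmaMap (c i) (d i)) hxy
    rwa [sigmaMap_inv hxi, sigmaMap_inv hyj] at this
  · exfalso
    have h1 : f x ∈ cyl (c i) := by rw [hf i x hxi]; exact sigmaMap_mem _ _ _
    have h2 : f y ∈ cyl (c j) := by rw [hf j y hyj]; exact sigmaMap_mem _ _ _
    rw [hxy] at h1
    exact Set.disjoint_left.1 (hc i j hij) h1 h2

----------------- batch 5 -----------------

def Inside (S : Set Cantor) (v : Finset BV) : Prop := ∀ b ∈ v, suppV b ⊆ S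

lemma isBasV_supp_subset {b : BV} {u : Finset BV} (h : IsBasV b u) :
    ∀ e ∈ u, suppV e ⊆ suppV b := by
  obtain ⟨p, pl, pr, hp, hlw, hlf, hrw, hrf, hu⟩ := h
  intro e he
  have hb : suppV b = p.f '' cyl p.word := by rw [← hp, suppV_mk]
  rw [hu] at he
  rcases Finset.mem_insert.1 he with rfl | he
  · rw [suppV_mk, hlw, hlf, hb]
    exact Set.image_mono (cyl_append_subset _ _)
  · rw [Finset.mem_singleton.1 he, suppV_mk, hrw, hrf, hb]
    exact Set.image_mono (cyl_append_subset _ _)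

lemma step_inside {S : Set Cantor} {v v' : Finset BV} (h : stepV v v') (hv : Inside S v) :
    Inside S v' := by
  obtain ⟨b, hb, u, hbas, rfl⟩ := h
  intro e he
  rcases Finset.mem_union.1 he with he | he
  · exact hv e (Finset.mem_of_mem_erase he)
  · exact (isBasV_supp_subset hbas e he).trans (hv b hb)

lemma prec_inside {S : Set Cantor} {v w : Finset BV} (h : precV v w) (hv : Inside S v) :
    Inside S w := by
  induction h with
  | refl => exact hv
  | tail _ hstep ih => exact step_inside hstep ih

lemma step_union {S : Set Cantor} {v w u : Finset BV} (h : stepV v w) (hv : Inside S v)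
    (hu : ∀ e ∈ u, Disjoint (suppV e) S) : stepV (v ∪ u) (w ∪ u) := by
  obtain ⟨b, hb, u₀, hbas, rfl⟩ := h
  have hbu : b ∉ u := by
    intro hmem
    have h1 : suppV b ⊆ S := hv b hb
    have h2 : Disjoint (suppV b) S := hu b hmem
    rcases suppV_nonempty b with ⟨x, hx⟩
    exact Set.disjoint_left.1 h2 hx (h1 hx)
  refine ⟨b, Finset.mem_union_left _ hb, u₀, hbas, ?_⟩
  rw [Finset.erase_union_distrib, Finset.erase_eq_of_notMem hbu]
  ext e
  simp only [Finset.mem_union]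
  tauto

lemma prec_union {S : Set Cantor} {v w u : Finset BV} (h : precV v w) (hv : Inside S v)
    (hu : ∀ e ∈ u, Disjoint (suppV e) S) : precV (v ∪ u) (w ∪ u) := by
  induction h with
  | refl => exact Relation.ReflTransGen.refl
  | @tail w' w hprec hstep ih =>
    exact ih.tail (step_union hstep (prec_inside hprec hv) hu)

lemma big {v : Finset BV} (hv : VIsVertex v) (w : BV → Finset BV)
    (hw : ∀ b ∈ v, precV {b} (w b)) : precV v (v.biUnion w) := by
  classical
  induction v using Finset.induction_on with
  | empty => exact Relation.ReflTransGen.refl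
  | @insert b v' hb ih =>
    have hv' : VIsVertex v' := fun b₁ h₁ b₂ h₂ hne =>
      hv b₁ (Finset.mem_insert_of_mem h₁) b₂ (Finset.mem_insert_of_mem h₂) hne
    have h1 : precV v' (v'.biUnion w) := ih hv' (fun b' hb' => hw b' (Finset.mem_insert_of_mem hb'))
    have hInb : ∀ b'' ∈ v', Inside (suppV b'') (w b'') := fun b'' hb'' =>
      prec_inside (hw b'' (Finset.mem_insert_of_mem hb''))
        (fun e he => by rw [Finset.mem_singleton.1 he])
    have hA : precV (v' ∪ {b}) (v'.biUnion w ∪ {b}) := by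
      apply prec_union h1 (fun e he => Set.subset_biUnion_of_mem (u := suppV) he)
      intro e he
      rw [Finset.mem_singleton.1 he]
      rw [Set.disjoint_iUnion_right]
      intro b'
      rw [Set.disjoint_iUnion_right]
      intro hb'
      exact (hv b' (Finset.mem_insert_of_mem hb') b (Finset.mem_insert_self _ _)
        (fun h => hb (h ▸ hb'))).symm
    have hB : precV ({b} ∪ v'.biUnion w) (w b ∪ v'.biUnion w) := by
      apply prec_union (hw b (Finset.mem_insert_self _ _))
        (fun e he => by rw [Finset.mem_singleton.1 he])
      intro e he
      obtain ⟨b'', hb'', he''⟩ := Finset.mem_biUnion.1 he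
      have hsub : suppV e ⊆ suppV b'' := hInb b'' hb'' e he''
      have hdisj : Disjoint (suppV b'') (suppV b) :=
        hv b'' (Finset.mem_insert_of_mem hb'') b (Finset.mem_insert_self _ _)
          (fun h => hb (h ▸ hb''))
      exact hdisj.mono_left hsub
    have : precV (insert b v') (w b ∪ v'.biUnion w) := by
      rw [Finset.insert_eq, Finset.union_comm]
      exact hA.trans (by rwa [Finset.union_comm {b} (v'.biUnion w)] at hB)
    rwa [Finset.biUnion_insert]

----------------- batch 6 -----------------

noncomputable def basV (b : BV) : Finset BV :=
  {Quot.mk VEquiv (pairExt (Quot.out b) [false]), Quot.mk VEquiv (pairExt (Quot.out b) [true])}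

lemma isBasV_basV (b : BV) : IsBasV b (basV b) :=
  ⟨Quot.out b, pairExt (Quot.out b) [false], pairExt (Quot.out b) [true],
    Quot.out_eq b, rfl, rfl, rfl, rfl, rfl⟩

lemma prec_single (b : BV) : precV {b} (basV b) := by
  apply Relation.ReflTransGen.single
  refine ⟨b, Finset.mem_singleton_self b, basV b, isBasV_basV b, ?_⟩
  rw [Finset.erase_singleton, Finset.empty_union]

lemma basV_mk (p : VPair) : basV (Quot.mk VEquiv p) =
    {Quot.mk VEquiv (pairExt p [false]), Quot.mk VEquiv (pairExt p [true])} := by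
  have h : VEquiv (Quot.out (Quot.mk VEquiv p)) p := mk_eq_iff.1 (Quot.out_eq _)
  unfold basV
  rw [mk_pairExt_congr h, mk_pairExt_congr h]

def words : ℕ → Finset (List Bool)
  | 0 => {[]}
  | k+1 => (words k).biUnion (fun s => {s ++ [false], s ++ [true]})

lemma mem_words {s : List Bool} {k : ℕ} : s ∈ words k ↔ s.length = k := by
  induction k generalizing s with
  | zero => simp [words, List.length_eq_zero_iff]
  | succ k ih =>
    simp only [words, Finset.mem_biUnion, Finset.mem_insert, Finset.mem_singleton]
    constructor
    · rintro ⟨t, ht, rfl | rfl⟩ <;> simp [ih.1 ht]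
    · intro hlen
      have hne : s ≠ [] := by rintro rfl; simp at hlen
      refine ⟨s.dropLast, ih.2 (by rw [List.length_dropLast, hlen]; rfl), ?_⟩
      cases hgl : s.getLast hne with
      | false => left; rw [← hgl, List.dropLast_append_getLast hne]
      | true => right; rw [← hgl, List.dropLast_append_getLast hne]

lemma cyl_split (α : List Bool) : cyl α = cyl (α ++ [false]) ∪ cyl (α ++ [true]) := by
  apply Set.Subset.antisymm
  · intro x hx
    have key : ∀ b, x α.length = b → x ∈ cyl (α ++ [b]) := by
      intro b hb
      rw [mem_cyl_append]
      refine ⟨hx, fun j hj => ?_⟩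
      have hj0 : j = 0 := by simpa using hj
      subst hj0
      simpa using hb
    cases hb : x α.length with
    | false => exact Or.inl (key false hb)
    | true => exact Or.inr (key true hb)
  · rintro x (hx | hx) <;> exact cyl_append_subset _ _ hx

lemma cyl_eq_union_words (k : ℕ) (ω : List Bool) :
    (⋃ s ∈ words k, cyl (ω ++ s)) = cyl ω := by
  induction k generalizing ω with
  | zero => simp [words]
  | succ k ih =>
    calc (⋃ s ∈ words (k+1), cyl (ω ++ s))
        = ⋃ t ∈ words k, ⋃ s ∈ ({t ++ [false], t ++ [true]} : Finset (List Bool)),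
            cyl (ω ++ s) := by
          rw [show words (k+1) = (words k).biUnion (fun s => {s ++ [false], s ++ [true]}) from rfl]
          exact Finset.set_biUnion_biUnion _ _ _
      _ = ⋃ t ∈ words k, cyl (ω ++ t) := by
          apply Set.iUnion₂_congr
          intro t _
          rw [Finset.set_biUnion_insert, Finset.set_biUnion_singleton,
            ← List.append_assoc, ← List.append_assoc, ← cyl_split]
      _ = cyl ω := ih ω

noncomputable def leaves (p : VPair) (k : ℕ) : Finset BV :=
  (words k).image (fun s => Quot.mk VEquiv (pairExt p s))

lemma mem_leaves {p : VPair} {k : ℕ} {b : BV} :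
    b ∈ leaves p k ↔ ∃ s ∈ words k, Quot.mk VEquiv (pairExt p s) = b := Finset.mem_image

lemma disjoint_image_of_injOn {f : Cantor → Cantor} {S A B : Set Cantor}
    (hinj : Set.InjOn f S) (hA : A ⊆ S) (hB : B ⊆ S) (hAB : Disjoint A B) :
    Disjoint (f '' A) (f '' B) := by
  rw [Set.disjoint_left]
  rintro z ⟨x, hx, rfl⟩ ⟨y, hy, hxy⟩
  have : y = x := hinj (hB hy) (hA hx) hxy
  exact Set.disjoint_left.1 hAB hx (this ▸ hy)

lemma vertex_leaves (p : VPair) (k : ℕ) : VIsVertex (leaves p k) := by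
  intro b₁ h₁ b₂ h₂ hne
  obtain ⟨s, hs, rfl⟩ := Finset.mem_image.1 h₁
  obtain ⟨t, ht, rfl⟩ := Finset.mem_image.1 h₂
  have hst : s ≠ t := fun h => hne (by rw [h])
  rw [suppV_pairExt, suppV_pairExt]
  apply disjoint_image_of_injOn (isVMap_injOn p.isV) (cyl_append_subset _ _)
    (cyl_append_subset _ _)
  apply disjoint_cyl_of_ne (by simp [mem_words.1 hs, mem_words.1 ht])
  intro h
  exact hst (List.append_cancel_left h)

lemma biUnion_basV_leaves (p : VPair) (k : ℕ) :
    (leaves p k).biUnion basV = leaves p (k+1) := by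
  ext b
  simp only [mem_leaves, Finset.mem_biUnion]
  constructor
  · rintro ⟨b', ⟨s, hs, rfl⟩, hb⟩
    rw [basV_mk, pairExt_pairExt, pairExt_pairExt] at hb
    rcases Finset.mem_insert.1 hb with rfl | hb
    · exact ⟨s ++ [false], by
        simp only [words, Finset.mem_biUnion]; exact ⟨s, hs, by simp⟩, rfl⟩
    · rw [Finset.mem_singleton.1 hb]
      exact ⟨s ++ [true], by
        simp only [words, Finset.mem_biUnion]; exact ⟨s, hs, by simp⟩, rfl⟩
  · rintro ⟨u, hu, rfl⟩
    have : u ∈ (words k).biUnion (fun s => ({s ++ [false], s ++ [true]} : Finset (List Bool))) := hu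
    obtain ⟨s, hs, hmem⟩ := Finset.mem_biUnion.1 this
    refine ⟨Quot.mk VEquiv (pairExt p s), ⟨s, hs, rfl⟩, ?_⟩
    rw [basV_mk, pairExt_pairExt, pairExt_pairExt]
    rcases Finset.mem_insert.1 hmem with rfl | hmem
    · exact Finset.mem_insert_self _ _
    · rw [Finset.mem_singleton.1 hmem]
      exact Finset.mem_insert_of_mem (Finset.mem_singleton_self _)

lemma master (p : VPair) (k : ℕ) : precV {Quot.mk VEquiv p} (leaves p k) := by
  induction k with
  | zero =>
    have : leaves p 0 = {Quot.mk VEquiv p} := by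
      ext b
      rw [mem_leaves]
      simp [words, pairExt_nil]
      exact ⟨fun h => Finset.mem_singleton.2 h.symm, fun h => (Finset.mem_singleton.1 h).symm⟩
    rw [this]
    exact Relation.ReflTransGen.refl
  | succ k ih =>
    have h2 : precV (leaves p k) ((leaves p k).biUnion basV) :=
      big (vertex_leaves p k) basV (fun b _ => prec_single b)
    rw [biUnion_basV_leaves] at h2
    exact ih.trans h2

----------------- batch 7 -----------------

lemma exists_elem_leaf (p : VPair) :
    ∃ k : ℕ, ∀ s ∈ words k, ∃ e : List Bool, Quot.mk VEquiv (pairExt p s) = Ecl e := by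
  obtain ⟨n, d, c, hU, hd, hc, hf⟩ := p.isV
  refine ⟨Finset.univ.sup (fun i => (d i).length), fun s hs => ?_⟩
  have hx : extW (p.word ++ s) ∈ cyl (p.word ++ s) := extW_mem _
  have hxω : extW (p.word ++ s) ∈ cyl p.word := cyl_append_subset _ _ hx
  rw [← hU] at hxω
  obtain ⟨_, ⟨i, rfl⟩, hxi⟩ := hxω
  have hlen : (d i).length ≤ (p.word ++ s).length := by
    have h1 : (d i).length ≤ Finset.univ.sup (fun i => (d i).length) :=
      Finset.le_sup (f := fun i => (d i).length) (Finset.mem_univ i)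
    have h2 := mem_words.1 hs
    simp only [List.length_append]
    omega
  have hpre : d i <+: p.word ++ s := by
    rcases prefix_comparable hxi hx with h | h
    · exact h
    · exact (h.eq_of_length (le_antisymm h.length_le hlen)).symm ▸ List.prefix_refl _
  set t := (p.word ++ s).drop (d i).length with ht
  have hsplit : d i ++ t = p.word ++ s := by
    conv_rhs => rw [← List.take_append_drop (d i).length (p.word ++ s)]
    rw [← List.prefix_iff_eq_take.1 hpre]
  refine ⟨c i ++ t, mk_eq_iff.2 ?_⟩
  intro x hx'
  show sigmaMap (c i ++ t) (c i ++ t) (sigmaMap (p.word ++ s) (c i ++ t) x) = p.f x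
  rw [sigmaMap_sigmaMap]
  have hxd : x ∈ cyl (d i ++ t) := by rwa [hsplit]
  rw [hf i x (cyl_append_subset _ _ hxd), ← sigmaMap_append (β := c i) hxd, hsplit]

lemma exists_elem_expansion (b : BV) :
    ∃ C : Finset (List Bool), precV {b} (C.image Ecl) ∧
      (∀ e₁ ∈ C, ∀ e₂ ∈ C, e₁ ≠ e₂ → Disjoint (cyl e₁) (cyl e₂)) ∧
      (⋃ e ∈ C, cyl e) = suppV b := by
  classical
  set p := Quot.out b with hp
  obtain ⟨k, hk⟩ := exists_elem_leaf p
  have hk' : ∀ s : List Bool, ∃ e : List Bool,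
      s ∈ words k → Quot.mk VEquiv (pairExt p s) = Ecl e := by
    intro s
    by_cases h : s ∈ words k
    · obtain ⟨e, he⟩ := hk s h; exact ⟨e, fun _ => he⟩
    · exact ⟨[], fun h' => absurd h' h⟩
  choose E' hE' using hk'
  refine ⟨(words k).image E', ?_, ?_, ?_⟩
  · have hm : precV {Quot.mk VEquiv p} (leaves p k) := master p k
    have hb' : (Quot.mk VEquiv (Quot.out b) : BV) = b := Quot.out_eq b
    rw [hp, hb'] at hm
    have himg : ((words k).image E').image Ecl = leaves p k := by
      rw [Finset.image_image]
      apply Finset.image_congr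
      intro s hs
      exact (hE' s hs).symm
    rwa [himg]
  · intro e₁ h₁ e₂ h₂ hne
    obtain ⟨s, hs, rfl⟩ := Finset.mem_image.1 h₁
    obtain ⟨t, ht, rfl⟩ := Finset.mem_image.1 h₂
    have hst : s ≠ t := fun h => hne (by rw [h])
    have hc1 : cyl (E' s) = p.f '' cyl (p.word ++ s) := by
      rw [← suppV_Ecl (E' s), ← hE' s hs, suppV_pairExt]
    have hc2 : cyl (E' t) = p.f '' cyl (p.word ++ t) := by
      rw [← suppV_Ecl (E' t), ← hE' t ht, suppV_pairExt]
    rw [hc1, hc2]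
    apply disjoint_image_of_injOn (isVMap_injOn p.isV) (cyl_append_subset _ _)
      (cyl_append_subset _ _)
    apply disjoint_cyl_of_ne (by simp [mem_words.1 hs, mem_words.1 ht])
    intro h
    exact hst (List.append_cancel_left h)
  · have : (⋃ e ∈ (words k).image E', cyl e) = ⋃ s ∈ words k, cyl (E' s) := by
      ext x
      simp only [Set.mem_iUnion, Finset.mem_image]
      constructor
      · rintro ⟨e, ⟨⟨s, hs, rfl⟩, hx⟩⟩; exact ⟨s, hs, hx⟩
      · rintro ⟨s, hs, hx⟩; exact ⟨E' s, ⟨⟨s, hs, rfl⟩, hx⟩⟩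
    rw [this]
    have heach : ∀ s ∈ words k, cyl (E' s) = p.f '' cyl (p.word ++ s) := by
      intro s hs
      rw [← suppV_Ecl (E' s), ← hE' s hs, suppV_pairExt]
    calc (⋃ s ∈ words k, cyl (E' s)) = ⋃ s ∈ words k, p.f '' cyl (p.word ++ s) :=
          Set.iUnion₂_congr heach
      _ = p.f '' ⋃ s ∈ words k, cyl (p.word ++ s) := (Set.image_iUnion₂ _ _).symm
      _ = p.f '' cyl p.word := by rw [cyl_eq_union_words]
      _ = suppV b := rfl

lemma mk_pairExt_elem (c s : List Bool) :
    Quot.mk VEquiv (pairExt (elemPair c c) s) = Ecl (c ++ s) := by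
  apply mk_eq_iff.2
  intro x hx
  have hx' : x ∈ cyl (c ++ s) := hx
  show sigmaMap (c ++ s) (c ++ s) (sigmaMap (c ++ s) (c ++ s) x) = sigmaMap c c x
  rw [sigmaMap_self hx', sigmaMap_self hx', sigmaMap_self (cyl_append_subset _ _ hx')]

lemma elem_expand (c : List Bool) (m : ℕ) :
    precV {Ecl c} ((words m).image (fun s => Ecl (c ++ s))) := by
  have hm := master (elemPair c c) m
  have himg : leaves (elemPair c c) m = (words m).image (fun s => Ecl (c ++ s)) :=
    Finset.image_congr (fun s _ => mk_pairExt_elem c s)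
  rwa [himg] at hm

----------------- batch 8 -----------------

lemma vertex_to_elem (v : Finset BV) (hv : VIsVertex v) :
    ∃ C : Finset (List Bool), precV v (C.image Ecl) ∧
      (∀ e₁ ∈ C, ∀ e₂ ∈ C, e₁ ≠ e₂ → Disjoint (cyl e₁) (cyl e₂)) ∧
      (⋃ e ∈ C, cyl e) = vsuppV v := by
  classical
  choose F h1 h2 h3 using exists_elem_expansion
  refine ⟨v.biUnion F, ?_, ?_, ?_⟩
  · have hb := big hv (fun b => (F b).image Ecl) (fun b _ => h1 b)
    have heq : v.biUnion (fun b => (F b).image Ecl) = (v.biUnion F).image Ecl := by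
      ext x
      simp only [Finset.mem_biUnion, Finset.mem_image]
      constructor
      · rintro ⟨b, hb, e, he, rfl⟩; exact ⟨e, ⟨b, hb, he⟩, rfl⟩
      · rintro ⟨e, ⟨b, hb, he⟩, rfl⟩; exact ⟨b, hb, e, he, rfl⟩
    rwa [heq] at hb
  · intro e₁ he₁ e₂ he₂ hne
    obtain ⟨b₁, hb₁, hf₁⟩ := Finset.mem_biUnion.1 he₁
    obtain ⟨b₂, hb₂, hf₂⟩ := Finset.mem_biUnion.1 he₂
    rcases eq_or_ne b₁ b₂ with rfl | hbne
    · exact h2 b₁ e₁ hf₁ e₂ hf₂ hne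
    · have s1 : cyl e₁ ⊆ suppV b₁ := by
        rw [← h3 b₁]; exact Set.subset_biUnion_of_mem (u := fun e => cyl e) hf₁
      have s2 : cyl e₂ ⊆ suppV b₂ := by
        rw [← h3 b₂]; exact Set.subset_biUnion_of_mem (u := fun e => cyl e) hf₂
      exact (hv b₁ hb₁ b₂ hb₂ hbne).mono s1 s2
  · calc (⋃ e ∈ v.biUnion F, cyl e) = ⋃ b ∈ v, ⋃ e ∈ F b, cyl e := by
          ext x
          simp only [Set.mem_iUnion, Finset.mem_biUnion]
          tauto
      _ = ⋃ b ∈ v, suppV b := Set.iUnion₂_congr (fun b _ => h3 b)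
      _ = vsuppV v := rfl

lemma elem_to_uniform (C : Finset (List Bool)) (N : ℕ)
    (hdisj : ∀ e₁ ∈ C, ∀ e₂ ∈ C, e₁ ≠ e₂ → Disjoint (cyl e₁) (cyl e₂))
    (hN : ∀ c ∈ C, c.length ≤ N)
    (hcov : (⋃ e ∈ C, cyl e) = Set.univ) :
    precV (C.image Ecl) ((words N).image Ecl) := by
  classical
  set w : BV → Finset BV := fun b =>
    (C.filter (fun c => Ecl c = b)).biUnion
      (fun c => (words (N - c.length)).image (fun s => Ecl (c ++ s))) with hw
  have hfil : ∀ c ∈ C, C.filter (fun c' => Ecl c' = Ecl c) = {c} := by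
    intro c hc
    ext c'
    simp only [Finset.mem_filter, Finset.mem_singleton]
    constructor
    · rintro ⟨_, h⟩; exact Ecl_inj h
    · rintro rfl; exact ⟨hc, rfl⟩
  have hvert : VIsVertex (C.image Ecl) := by
    intro b₁ hb₁ b₂ hb₂ hne
    obtain ⟨e₁, he₁, rfl⟩ := Finset.mem_image.1 hb₁
    obtain ⟨e₂, he₂, rfl⟩ := Finset.mem_image.1 hb₂
    rw [suppV_Ecl, suppV_Ecl]
    exact hdisj e₁ he₁ e₂ he₂ (fun h => hne (by rw [h]))
  have hbig := big hvert w ?prec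
  case prec =>
    intro b hb
    obtain ⟨c, hc, rfl⟩ := Finset.mem_image.1 hb
    have : w (Ecl c) = (words (N - c.length)).image (fun s => Ecl (c ++ s)) := by
      rw [hw]
      simp only
      rw [hfil c hc, Finset.singleton_biUnion]
    rw [this]
    exact elem_expand c (N - c.length)
  have heq : (C.image Ecl).biUnion w = (words N).image Ecl := by
    ext b
    simp only [Finset.mem_biUnion, Finset.mem_image]
    constructor
    · rintro ⟨b', ⟨c, hc, rfl⟩, hb⟩
      rw [hw] at hb
      simp only at hb
      rw [hfil c hc, Finset.singleton_biUnion] at hb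
      obtain ⟨s, hs, rfl⟩ := Finset.mem_image.1 hb
      refine ⟨c ++ s, mem_words.2 ?_, rfl⟩
      have := mem_words.1 hs
      have := hN c hc
      simp only [List.length_append]
      omega
    · rintro ⟨u, hu, rfl⟩
      have hxu : extW u ∈ cyl u := extW_mem u
      have : extW u ∈ (⋃ e ∈ C, cyl e) := hcov.symm ▸ Set.mem_univ _
      obtain ⟨c, hc, hxc⟩ := Set.mem_iUnion₂.1 this
      have hpre : c <+: u := by
        rcases prefix_comparable hxc hxu with h | h
        · exact h
        · have hle : u.length ≤ c.length := h.length_le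
          have : c.length ≤ u.length := by rw [mem_words.1 hu]; exact hN c hc
          exact (h.eq_of_length (le_antisymm hle this)).symm ▸ List.prefix_refl _
      set s := u.drop c.length with hs
      have hsplit : c ++ s = u := by
        conv_rhs => rw [← List.take_append_drop c.length u]
        rw [← List.prefix_iff_eq_take.1 hpre]
      refine ⟨Ecl c, ⟨c, hc, rfl⟩, ?_⟩
      rw [hw]
      simp only
      rw [hfil c hc, Finset.singleton_biUnion]
      apply Finset.mem_image.2
      refine ⟨s, mem_words.2 ?_, by rw [hsplit]⟩
      rw [hs, List.length_drop, mem_words.1 hu]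
  rwa [heq] at hbig

lemma cyl_nil : cyl ([] : List Bool) = Set.univ := by
  apply Set.eq_univ_iff_forall.2
  intro x i
  exact i.elim0

lemma uniform_vertex (N : ℕ) : VIsVertex ((words N).image Ecl) := by
  intro b₁ hb₁ b₂ hb₂ hne
  obtain ⟨u₁, hu₁, rfl⟩ := Finset.mem_image.1 hb₁
  obtain ⟨u₂, hu₂, rfl⟩ := Finset.mem_image.1 hb₂
  rw [suppV_Ecl, suppV_Ecl]
  apply disjoint_cyl_of_ne (by rw [mem_words.1 hu₁, mem_words.1 hu₂])
  exact fun h => hne (by rw [h])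

lemma uniform_full (N : ℕ) : vsuppV ((words N).image Ecl) = Set.univ := by
  have h1 : vsuppV ((words N).image Ecl) = ⋃ u ∈ words N, cyl u := by
    rw [vsuppV]
    ext x
    simp only [Set.mem_iUnion, Finset.mem_image]
    constructor
    · rintro ⟨b, ⟨u, hu, rfl⟩, hx⟩
      exact ⟨u, hu, by rwa [suppV_Ecl] at hx⟩
    · rintro ⟨u, hu, hx⟩
      exact ⟨Ecl u, ⟨u, hu, rfl⟩, by rwa [suppV_Ecl]⟩
  rw [h1, ← cyl_nil, ← cyl_eq_union_words N []]
  simp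

/-- Directedness for Thompson's group `V`: the full-support vertices of
`𝓑_V` form a directed set with respect to `⪯`. -/
theorem BV_directed (v₁ v₂ : Finset BV)
    (h₁ : VIsVertex v₁) (h₁full : vsuppV v₁ = Set.univ)
    (h₂ : VIsVertex v₂) (h₂full : vsuppV v₂ = Set.univ) :
    ∃ v'' : Finset BV, VIsVertex v'' ∧ vsuppV v'' = Set.univ ∧
      precV v₁ v'' ∧ precV v₂ v'' := by
  classical
  obtain ⟨C₁, hp₁, hd₁, hc₁⟩ := vertex_to_elem v₁ h₁
  obtain ⟨C₂, hp₂, hd₂, hc₂⟩ := vertex_to_elem v₂ h₂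
  set N := (C₁ ∪ C₂).sup List.length with hN
  have hN₁ : ∀ c ∈ C₁, c.length ≤ N :=
    fun c hc => Finset.le_sup (Finset.mem_union_left _ hc)
  have hN₂ : ∀ c ∈ C₂, c.length ≤ N :=
    fun c hc => Finset.le_sup (Finset.mem_union_right _ hc)
  have hu₁ : precV (C₁.image Ecl) ((words N).image Ecl) :=
    elem_to_uniform C₁ N hd₁ hN₁ (by rw [hc₁, h₁full])
  have hu₂ : precV (C₂.image Ecl) ((words N).image Ecl) :=
    elem_to_uniform C₂ N hd₂ hN₂ (by rw [hc₂, h₂full])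
  exact ⟨(words N).image Ecl, uniform_vertex N, uniform_full N,
    hp₁.trans hu₁, hp₂.trans hu₂⟩
end
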